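/- arXiv:math/0109043 — 8 statements merged into one kernel-verified Lean document; each statement's English description precedes it below -/
import Mathlib

section
/- (Theorem 3(iv) for ker BW.) Let m, n ≥ 2 be integers and c = gcd(m+1, n+1) − 1 with c ≥ 1. Then the 𝔽₂-dimension of the polarized kernel ker BW of the m×n rectangular grid equals the 𝔽₂-dimension of the polarized kernel of the c×c rectangular grid. -/
/-- Membership in the m×n rectangular grid {0,…,m−1}×{0,…,n−1}. -/
def InGrid (m n i j : ℤ) : Prop :=
  0 ≤ i ∧ i ≤ m - 1 ∧ 0 ≤ j ∧ j ≤ n - 1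


instance (m n i j : ℤ) : Decidable (InGrid m n i j) :=
  inferInstanceAs (Decidable (_ ∧ _ ∧ _ ∧ _))

/-- A function on ℤ×ℤ with values in ZMod 2, vanishing outside the m×n grid,
is harmonic if the sum of its values at the four neighbours of any grid point is 0. -/
def IsHarmonic (m n : ℤ) (v : ℤ → ℤ → ZMod 2) : Prop :=
  (∀ i j : ℤ, ¬ InGrid m n i j → v i j = 0) ∧
  (∀ i j : ℤ, InGrid m n i j →
    v (i - 1) j + v (i + 1) j + v i (j - 1) + v i (j + 1) = 0)

/-- The 𝔽₂-vector space of harmonic functions on the m×n grid. -/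
def harm (m n : ℤ) : Submodule (ZMod 2) (ℤ → ℤ → ZMod 2) where
  carrier := {v | IsHarmonic m n v}
  zero_mem' := ⟨fun _ _ _ => rfl, fun _ _ _ => by simp⟩
  add_mem' := by
    rintro a b ⟨ha0, ha1⟩ ⟨hb0, hb1⟩
    refine ⟨fun i j h => ?_, fun i j h => ?_⟩
    · simp [Pi.add_apply, ha0 i j h, hb0 i j h]
    · have h1 := ha1 i j h
      have h2 := hb1 i j h
      simp only [Pi.add_apply]
      linear_combination h1 + h2
  smul_mem' := by
    rintro c a ⟨ha0, ha1⟩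
    refine ⟨fun i j h => ?_, fun i j h => ?_⟩
    · simp [Pi.smul_apply, ha0 i j h]
    · have h1 := ha1 i j h
      simp only [Pi.smul_apply, smul_eq_mul]
      linear_combination c * h1

/-- Functions vanishing on a prescribed set of points. -/
def vanishOn (P : ℤ → ℤ → Prop) : Submodule (ZMod 2) (ℤ → ℤ → ZMod 2) where
  carrier := {v | ∀ i j : ℤ, P i j → v i j = 0}
  zero_mem' := fun _ _ _ => rfl
  add_mem' := by
    intro a b ha hb i j h
    simp [Pi.add_apply, ha i j h, hb i j h]
  smul_mem' := by
    intro c a ha i j h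
    simp [Pi.smul_apply, ha i j h]

/-- The polarized kernel ker BW: harmonic functions vanishing at white points
(points with i+j odd). -/
def kerBW (m n : ℤ) : Submodule (ZMod 2) (ℤ → ℤ → ZMod 2) :=
  harm m n ⊓ vanishOn (fun i j => Odd (i + j))

/-- The polarized kernel ker WB: harmonic functions vanishing at black points
(points with i+j even). -/
def kerWB (m n : ℤ) : Submodule (ZMod 2) (ℤ → ℤ → ZMod 2) :=
  harm m n ⊓ vanishOn (fun i j => Even (i + j))


lemma two_self (a : ZMod 2) : a + a = 0 := by revert a; decide

def fold (M i : ℤ) : ℤ := if i % (2*M) < M then i % (2*M) else 2*M - 2 - i % (2*M)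

lemma emod_succ (i D : ℤ) (hD : 2 ≤ D) :
    ((i+1) % D = i % D + 1 ∧ i % D < D - 1) ∨ ((i+1) % D = 0 ∧ i % D = D - 1) := by
  have h0 : 0 ≤ i % D := Int.emod_nonneg _ (by omega)
  have h1 : i % D < D := Int.emod_lt_of_pos _ (by omega)
  have h2 : (i+1) % D = (i % D + 1 % D) % D := Int.add_emod i 1 D
  have h3 : (1:ℤ) % D = 1 := Int.emod_eq_of_lt (by omega) (by omega)
  rw [h3] at h2
  rcases eq_or_lt_of_le (by omega : i % D + 1 ≤ D) with h | h
  · right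
    rw [h2, h, Int.emod_self]
    omega
  · left
    rw [h2, Int.emod_eq_of_lt (by omega) h]
    omega

lemma neg_one_emod (D : ℤ) (hD : 2 ≤ D) : (-1) % D = D - 1 := by
  have h : (-1 + D * 1) % D = (-1 : ℤ) % D := Int.add_mul_emod_self_left (-1) D 1
  rw [show (-1 + D*1 : ℤ) = D - 1 by ring] at h
  rw [← h]
  exact Int.emod_eq_of_lt (by omega) (by omega)

lemma fold_range (M i : ℤ) (hM : 2 ≤ M) : -1 ≤ fold M i ∧ fold M i ≤ M - 1 := by
  have h0 : 0 ≤ i % (2*M) := Int.emod_nonneg _ (by omega)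
  have h1 : i % (2*M) < 2*M := Int.emod_lt_of_pos _ (by omega)
  unfold fold; split <;> omega

lemma fold_id (M i : ℤ) (hM : 2 ≤ M) (h : -1 ≤ i ∧ i ≤ M - 1) : fold M i = i := by
  rcases eq_or_lt_of_le h.1 with h' | h'
  · have : i % (2*M) = 2*M - 1 := by rw [← h']; exact neg_one_emod _ (by omega)
    unfold fold; split <;> omega
  · have : i % (2*M) = i := Int.emod_eq_of_lt (by omega) (by omega)
    unfold fold; split <;> omega

lemma fold_parity (M i : ℤ) (hM : 2 ≤ M) : fold M i % 2 = i % 2 := by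
  have h : i % (2*M) % 2 = i % 2 := Int.emod_emod_of_dvd i ⟨M, by ring⟩
  unfold fold; split <;> omega

set_option maxHeartbeats 1000000 in
lemma fold_nbr (M i : ℤ) (hM : 2 ≤ M) :
    (fold M i = -1 ∧ fold M (i-1) = 0 ∧ fold M (i+1) = 0) ∨
    (fold M i = M-1 ∧ fold M (i-1) = M-2 ∧ fold M (i+1) = M-2) ∨
    (0 ≤ fold M i ∧ fold M i ≤ M-2 ∧
      ((fold M (i-1) = fold M i - 1 ∧ fold M (i+1) = fold M i + 1) ∨
       (fold M (i-1) = fold M i + 1 ∧ fold M (i+1) = fold M i - 1))) := by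
  have hD : (2:ℤ) ≤ 2*M := by omega
  have e1 := emod_succ i (2*M) hD
  have e2 := emod_succ (i-1) (2*M) hD
  rw [show i - 1 + 1 = i by ring] at e2
  have h0 : 0 ≤ i % (2*M) := Int.emod_nonneg _ (by omega)
  have h1 : i % (2*M) < 2*M := Int.emod_lt_of_pos _ (by omega)
  have h0' : 0 ≤ (i-1) % (2*M) := Int.emod_nonneg _ (by omega)
  have h1' : (i-1) % (2*M) < 2*M := Int.emod_lt_of_pos _ (by omega)
  have h0'' : 0 ≤ (i+1) % (2*M) := Int.emod_nonneg _ (by omega)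
  have h1'' : (i+1) % (2*M) < 2*M := Int.emod_lt_of_pos _ (by omega)
  unfold fold
  split_ifs <;> omega

lemma fold_dvd (M i : ℤ) (hM : 2 ≤ M) (h : M ∣ i + 1) :
    fold M i = -1 ∨ fold M i = M - 1 := by
  obtain ⟨k, hk⟩ := h
  rcases Int.even_or_odd k with ⟨j, hj⟩ | ⟨j, hj⟩
  · have h1 : i % (2*M) = (-1) % (2*M) := by
      rw [show i = -1 + (2*M) * j by linear_combination hk + M * hj]
      exact Int.add_mul_emod_self_left (-1) (2*M) j
    rw [neg_one_emod _ (by omega)] at h1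
    unfold fold; split <;> omega
  · have h1 : i % (2*M) = (M-1) % (2*M) := by
      rw [show i = (M-1) + (2*M) * j by linear_combination hk + M * hj]
      exact Int.add_mul_emod_self_left (M-1) (2*M) j
    rw [Int.emod_eq_of_lt (a := M-1) (b := 2*M) (by omega) (by omega)] at h1
    unfold fold; split <;> omega

lemma fold_dvd' (M i : ℤ) (hM : 2 ≤ M) (h : fold M i = -1 ∨ fold M i = M - 1) :
    M ∣ i + 1 := by
  have hr : i % (2*M) + 2*M * (i / (2*M)) = i := Int.emod_add_mul_ediv i (2*M)
  have h0 : 0 ≤ i % (2*M) := Int.emod_nonneg _ (by omega)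
  have h1 : i % (2*M) < 2*M := Int.emod_lt_of_pos _ (by omega)
  by_cases hc : i % (2*M) < M
  · rw [fold, if_pos hc] at h
    have h' : i % (2*M) = M - 1 := by omega
    exact ⟨2 * (i / (2*M)) + 1, by linear_combination hr.symm + h'⟩
  · rw [fold, if_neg hc] at h
    have h' : i % (2*M) = 2*M - 1 := by omega
    exact ⟨2 * (i / (2*M)) + 2, by linear_combination hr.symm + h'⟩

lemma fold_rep (M i : ℤ) (hM : 2 ≤ M) :
    (∃ k, fold M i = i + 2*M*k) ∨ (∃ k, fold M i = -2 - i + 2*M*k) := by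
  have hr : i % (2*M) + 2*M * (i / (2*M)) = i := Int.emod_add_mul_ediv i (2*M)
  unfold fold; split
  · exact Or.inl ⟨-(i / (2*M)), by linear_combination hr⟩
  · exact Or.inr ⟨i / (2*M) + 1, by linear_combination -hr⟩

def Per (M N : ℤ) : Submodule (ZMod 2) (ℤ → ZMod 2) where
  carrier := {φ | (∀ t, φ (t + M) = φ t) ∧ (∀ t, φ (t + N) = φ t) ∧
    (∀ t, φ (-2 - t) = φ t) ∧ φ (-1) = 0}
  zero_mem' := ⟨fun _ => rfl, fun _ => rfl, fun _ => rfl, rfl⟩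
  add_mem' := by
    rintro a b ⟨ha1, ha2, ha3, ha4⟩ ⟨hb1, hb2, hb3, hb4⟩
    exact ⟨fun t => by simp [ha1 t, hb1 t], fun t => by simp [ha2 t, hb2 t],
      fun t => by simp [ha3 t, hb3 t], by simp [ha4, hb4]⟩
  smul_mem' := by
    rintro c a ⟨ha1, ha2, ha3, ha4⟩
    exact ⟨fun t => by simp [ha1 t], fun t => by simp [ha2 t],
      fun t => by simp [ha3 t], by simp [ha4]⟩

lemma mem_Per {M N : ℤ} {φ : ℤ → ZMod 2} :
    φ ∈ Per M N ↔ ((∀ t, φ (t + M) = φ t) ∧ (∀ t, φ (t + N) = φ t) ∧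
      (∀ t, φ (-2 - t) = φ t) ∧ φ (-1) = 0) := Iff.rfl

lemma periodic_mul {φ : ℤ → ZMod 2} {d : ℤ} (h : ∀ t, φ (t + d) = φ t) :
    ∀ (k t : ℤ), φ (t + k*d) = φ t := by
  intro k
  induction k using Int.induction_on with
  | zero => intro t; rw [show t + 0*d = t by ring]
  | succ k ih =>
      intro t
      rw [show t + (k+1)*d = (t + k*d) + d by ring, h, ih]
  | pred k ih =>
      intro t
      have h2 : φ (t + -k*d - d + d) = φ (t + -k*d - d) := h _
      rw [show t + -k*d - d + d = t + -k*d by ring] at h2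
      rw [show t + (-k-1)*d = t + -k*d - d by ring, ← h2, ih]

def wext (m n : ℤ) (v : ℤ → ℤ → ZMod 2) : ℤ → ℤ → ZMod 2 :=
  fun i j => v (fold (m+1) i) (fold (n+1) j)

def fdiag (m n : ℤ) (v : ℤ → ℤ → ZMod 2) : ℤ → ℤ → ZMod 2 :=
  fun a b => wext m n v (a+b) (a-b)

def Rmap (m n : ℤ) (v : ℤ → ℤ → ZMod 2) : ℤ → ZMod 2 :=
  fun t => fdiag m n v t 0

def Tmap (m n : ℤ) (φ : ℤ → ZMod 2) : ℤ → ℤ → ZMod 2 := fun i j =>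
  if InGrid m n i j ∧ (i + j) % 2 = 0 then φ ((i+j)/2) + φ (-1 - (i-j)/2) else 0

section core

variable {m n : ℤ} {v : ℤ → ℤ → ZMod 2}

lemma wext_harm (hm : 1 ≤ m) (hn : 1 ≤ n)
    (hv0 : ∀ i j, ¬ InGrid m n i j → v i j = 0)
    (hv1 : ∀ i j, InGrid m n i j → v (i-1) j + v (i+1) j + v i (j-1) + v i (j+1) = 0)
    (i j : ℤ) :
    wext m n v (i-1) j + wext m n v (i+1) j + wext m n v i (j-1) + wext m n v i (j+1) = 0 := by
  have hM : (2:ℤ) ≤ m+1 := by omega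
  have hN : (2:ℤ) ≤ n+1 := by omega
  have vz : ∀ x y, (x < 0 ∨ m - 1 < x ∨ y < 0 ∨ n - 1 < y) → v x y = 0 := by
    intro x y h
    exact hv0 x y (fun hg => by unfold InGrid at hg; omega)
  unfold wext
  rcases fold_nbr (m+1) i hM with ⟨h1,h2,h3⟩ | ⟨h1,h2,h3⟩ | ⟨h1a,h1b,hio⟩
  · rw [h1, h2, h3, vz (-1) _ (by omega), vz (-1) _ (by omega)]
    simp [two_self]
  · rw [h1, h2, h3, vz (m+1-1) _ (by omega), vz (m+1-1) _ (by omega)]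
    simp [two_self]
  · rcases fold_nbr (n+1) j hN with ⟨g1,g2,g3⟩ | ⟨g1,g2,g3⟩ | ⟨g1a,g1b,hjo⟩
    · rw [g1, g2, g3, vz _ (-1) (by omega), vz _ (-1) (by omega)]
      simp [two_self]
    · rw [g1, g2, g3, vz _ (n+1-1) (by omega), vz _ (n+1-1) (by omega)]
      simp [two_self]
    · have hg : InGrid m n (fold (m+1) i) (fold (n+1) j) := ⟨by omega, by omega, by omega, by omega⟩
      have h := hv1 _ _ hg
      rcases hio with ⟨e1, e2⟩ | ⟨e1, e2⟩ <;> rcases hjo with ⟨f1, f2⟩ | ⟨f1, f2⟩ <;>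
        rw [e1, e2, f1, f2] <;> linear_combination h

lemma wext_col (hm : 1 ≤ m)
    (hv0 : ∀ i j, ¬ InGrid m n i j → v i j = 0)
    (i j : ℤ) (h : (m+1) ∣ i + 1) : wext m n v i j = 0 := by
  have vz : ∀ x y, (x < 0 ∨ m - 1 < x ∨ y < 0 ∨ n - 1 < y) → v x y = 0 := by
    intro x y h
    exact hv0 x y (fun hg => by unfold InGrid at hg; omega)
  unfold wext
  rcases fold_dvd (m+1) i (by omega) h with h' | h' <;> rw [h'] <;>
    exact vz _ _ (by omega)

lemma wext_row (hn : 1 ≤ n)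
    (hv0 : ∀ i j, ¬ InGrid m n i j → v i j = 0)
    (i j : ℤ) (h : (n+1) ∣ j + 1) : wext m n v i j = 0 := by
  have vz : ∀ x y, (x < 0 ∨ m - 1 < x ∨ y < 0 ∨ n - 1 < y) → v x y = 0 := by
    intro x y h
    exact hv0 x y (fun hg => by unfold InGrid at hg; omega)
  unfold wext
  rcases fold_dvd (n+1) j (by omega) h with h' | h' <;> rw [h'] <;>
    exact vz _ _ (by omega)

end core

section core2

variable {m n : ℤ} {v : ℤ → ℤ → ZMod 2}

lemma fplaq (hm : 1 ≤ m) (hn : 1 ≤ n)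
    (hv0 : ∀ i j, ¬ InGrid m n i j → v i j = 0)
    (hv1 : ∀ i j, InGrid m n i j → v (i-1) j + v (i+1) j + v i (j-1) + v i (j+1) = 0)
    (p q : ℤ) :
    fdiag m n v p q + fdiag m n v (p+1) q + fdiag m n v p (q+1) + fdiag m n v (p+1) (q+1) = 0 := by
  have h := wext_harm hm hn hv0 hv1 (p+q+1) (p-q)
  simp only [fdiag]
  ring_nf at h ⊢
  linear_combination h

lemma fstep1 (hm : 1 ≤ m) (hn : 1 ≤ n)
    (hv0 : ∀ i j, ¬ InGrid m n i j → v i j = 0)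
    (hv1 : ∀ i j, InGrid m n i j → v (i-1) j + v (i+1) j + v i (j-1) + v i (j+1) = 0)
    (p b : ℤ) :
    fdiag m n v p b + fdiag m n v (p+1) b + fdiag m n v p 0 + fdiag m n v (p+1) 0 = 0 := by
  induction b using Int.induction_on with
  | zero => linear_combination two_self (fdiag m n v p 0) + two_self (fdiag m n v (p+1) 0)
  | succ k ih =>
      have hpl := fplaq hm hn hv0 hv1 p k
      linear_combination ih + hpl - two_self (fdiag m n v p k) - two_self (fdiag m n v (p+1) k)
  | pred k ih =>
      have hpl := fplaq hm hn hv0 hv1 p (-k-1)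
      rw [show (-(k:ℤ)-1+1) = -k by ring] at hpl
      linear_combination ih + hpl - two_self (fdiag m n v p (-k)) - two_self (fdiag m n v (p+1) (-k))

lemma frect (hm : 1 ≤ m) (hn : 1 ≤ n)
    (hv0 : ∀ i j, ¬ InGrid m n i j → v i j = 0)
    (hv1 : ∀ i j, InGrid m n i j → v (i-1) j + v (i+1) j + v i (j-1) + v i (j+1) = 0)
    (a a' b b' : ℤ) :
    fdiag m n v a b + fdiag m n v a' b + fdiag m n v a b' + fdiag m n v a' b' = 0 := by
  have hT : ∀ x : ℤ, fdiag m n v x b + fdiag m n v x b' + fdiag m n v 0 b + fdiag m n v 0 b' = 0 := by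
    intro x
    induction x using Int.induction_on with
    | zero => linear_combination two_self (fdiag m n v 0 b) + two_self (fdiag m n v 0 b')
    | succ k ih =>
        have s1 := fstep1 hm hn hv0 hv1 k b
        have s2 := fstep1 hm hn hv0 hv1 k b'
        linear_combination ih + s1 + s2 - two_self (fdiag m n v k b) - two_self (fdiag m n v k b')
          - two_self (fdiag m n v k 0) - two_self (fdiag m n v (k+1) 0)
    | pred k ih =>
        have s1 := fstep1 hm hn hv0 hv1 (-k-1) b
        have s2 := fstep1 hm hn hv0 hv1 (-k-1) b'
        rw [show (-(k:ℤ)-1+1) = -k by ring] at s1 s2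
        linear_combination ih + s1 + s2 - two_self (fdiag m n v (-k) b) - two_self (fdiag m n v (-k) b')
          - two_self (fdiag m n v (-k-1) 0) - two_self (fdiag m n v (-k) 0)
  have h1 := hT a
  have h2 := hT a'
  linear_combination h1 + h2 - two_self (fdiag m n v 0 b) - two_self (fdiag m n v 0 b')

lemma fcol0 (hm : 1 ≤ m)
    (hv0 : ∀ i j, ¬ InGrid m n i j → v i j = 0)
    (a b : ℤ) (h : (m+1) ∣ (a + b + 1)) : fdiag m n v a b = 0 :=
  wext_col hm hv0 (a+b) (a-b) h

lemma frow0 (hn : 1 ≤ n)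
    (hv0 : ∀ i j, ¬ InGrid m n i j → v i j = 0)
    (a b : ℤ) (h : (n+1) ∣ (a - b + 1)) : fdiag m n v a b = 0 :=
  wext_row hn hv0 (a+b) (a-b) h

end core2

lemma mem_kerBW {m n : ℤ} {v : ℤ → ℤ → ZMod 2} :
    v ∈ kerBW m n ↔ (IsHarmonic m n v ∧ ∀ i j, Odd (i + j) → v i j = 0) := by
  rw [kerBW, Submodule.mem_inf]
  exact Iff.rfl

section main1

variable {m n : ℤ} {v : ℤ → ℤ → ZMod 2}

lemma Rmem (hm : 1 ≤ m) (hn : 1 ≤ n) (hv : v ∈ kerBW m n) :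
    Rmap m n v ∈ Per (m+1) (n+1) := by
  obtain ⟨⟨hv0, hv1⟩, hvW⟩ := mem_kerBW.mp hv
  refine mem_Per.mpr ⟨fun t => ?_, fun t => ?_, fun t => ?_, ?_⟩
  · show fdiag m n v (t + (m+1)) 0 = fdiag m n v t 0
    have h := frect hm hn hv0 hv1 (t+(m+1)) t 0 (-t-m-2)
    have z1 : fdiag m n v (t+(m+1)) (-t-m-2) = 0 := fcol0 hm hv0 _ _ ⟨0, by ring⟩
    have z2 : fdiag m n v t (-t-m-2) = 0 := fcol0 hm hv0 _ _ ⟨-1, by ring⟩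
    linear_combination h - z1 - z2 - two_self (fdiag m n v t 0)
  · show fdiag m n v (t + (n+1)) 0 = fdiag m n v t 0
    have h := frect hm hn hv0 hv1 (t+(n+1)) t 0 (t+1)
    have z1 : fdiag m n v (t+(n+1)) (t+1) = 0 := frow0 hn hv0 _ _ ⟨1, by ring⟩
    have z2 : fdiag m n v t (t+1) = 0 := frow0 hn hv0 _ _ ⟨0, by ring⟩
    linear_combination h - z1 - z2 - two_self (fdiag m n v t 0)
  · show fdiag m n v (-2 - t) 0 = fdiag m n v t 0
    have h := frect hm hn hv0 hv1 t (-2-t) 0 (t+1)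
    have z1 : fdiag m n v t (t+1) = 0 := frow0 hn hv0 _ _ ⟨0, by ring⟩
    have z2 : fdiag m n v (-2-t) (t+1) = 0 := fcol0 hm hv0 _ _ ⟨0, by ring⟩
    linear_combination h - z1 - z2 - two_self (fdiag m n v t 0)
  · show fdiag m n v (-1) 0 = 0
    exact fcol0 hm hv0 _ _ ⟨0, by ring⟩

lemma TRlem (hm : 1 ≤ m) (hn : 1 ≤ n) (hv : v ∈ kerBW m n) :
    Tmap m n (Rmap m n v) = v := by
  obtain ⟨⟨hv0, hv1⟩, hvW⟩ := mem_kerBW.mp hv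
  funext i j
  by_cases hg : InGrid m n i j ∧ (i + j) % 2 = 0
  · obtain ⟨hg1, hg2⟩ := hg
    have hgb : 0 ≤ i ∧ i ≤ m - 1 ∧ 0 ≤ j ∧ j ≤ n - 1 := hg1
    simp only [Tmap, if_pos (And.intro hg1 hg2)]
    obtain ⟨a, ha⟩ : ∃ a, i + j = 2*a := ⟨(i+j)/2, by omega⟩
    obtain ⟨b, hb⟩ : ∃ b, i - j = 2*b := ⟨(i-j)/2, by omega⟩
    rw [show (i+j)/2 = a by omega, show -1 - (i-j)/2 = -1-b by omega]
    have hij : v i j = fdiag m n v a b := by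
      unfold fdiag wext
      rw [fold_id (m+1) (a+b) (by omega) (by omega),
          fold_id (n+1) (a-b) (by omega) (by omega)]
      rw [show a+b = i by omega, show a-b = j by omega]
    have h := frect hm hn hv0 hv1 a (-1-b) b 0
    have z : fdiag m n v (-1-b) b = 0 := fcol0 hm hv0 _ _ ⟨0, by ring⟩
    rw [hij]
    show fdiag m n v a 0 + fdiag m n v (-1-b) 0 = fdiag m n v a b
    linear_combination h - z - two_self (fdiag m n v a b)
  · simp only [Tmap, if_neg hg]
    rcases not_and_or.mp hg with h | h
    · exact (hv0 i j h).symm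
    · exact (hvW i j (Int.odd_iff.mpr (by omega))).symm

end main1

section main2

variable {m n : ℤ} {φ : ℤ → ZMod 2}

lemma Tval (hφ : φ ∈ Per (m+1) (n+1)) (i j : ℤ)
    (hr : -1 ≤ i ∧ i ≤ m ∧ -1 ≤ j ∧ j ≤ n) (hpar : (i + j) % 2 = 0) :
    Tmap m n φ i j = φ ((i+j)/2) + φ (-1 - (i-j)/2) := by
  obtain ⟨hp1, hp2, hsym, hz⟩ := mem_Per.mp hφ
  by_cases hg : InGrid m n i j
  · simp only [Tmap, if_pos (And.intro hg hpar)]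
  · have hcases : i = -1 ∨ i = m ∨ j = -1 ∨ j = n := by unfold InGrid at hg; omega
    simp only [Tmap, if_neg (fun hh : _ ∧ _ => hg hh.1)]
    rcases hcases with h | h | h | h
    · rw [h, show -1 - ((-1:ℤ)-j)/2 = (-1+j)/2 by omega]
      exact (two_self _).symm
    · rw [h, show (m+j)/2 = (-1 - (m-j)/2) + (m+1) by omega, hp1 _]
      exact (two_self _).symm
    · rw [h, show -1 - (i - (-1:ℤ))/2 = -2 - ((i + -1)/2) by omega, hsym _]
      exact (two_self _).symm
    · rw [h, show -1 - (i-n)/2 = (-2 - ((i+n)/2)) + (n+1) by omega, hp2 _, hsym _]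
      exact (two_self _).symm

lemma Tmem (hm : 1 ≤ m) (hn : 1 ≤ n) (hφ : φ ∈ Per (m+1) (n+1)) :
    Tmap m n φ ∈ kerBW m n := by
  refine mem_kerBW.mpr ⟨⟨fun i j h => ?_, fun i j h => ?_⟩, fun i j h => ?_⟩
  · simp only [Tmap]
    rw [if_neg (fun hh : _ ∧ _ => h hh.1)]
  · -- harmonic at grid point (i,j)
    have hb : 0 ≤ i ∧ i ≤ m - 1 ∧ 0 ≤ j ∧ j ≤ n - 1 := h
    by_cases hpar : (i + j) % 2 = 0
    · -- black point: all neighbours white, values 0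
      have z : ∀ x y, (x + y) % 2 = 1 → Tmap m n φ x y = 0 := by
        intro x y hxy
        simp only [Tmap]
        rw [if_neg (fun hh : _ ∧ _ => by omega)]
      rw [z (i-1) j (by omega), z (i+1) j (by omega), z i (j-1) (by omega),
          z i (j+1) (by omega)]
      simp
    · -- white point
      obtain ⟨p, hp⟩ : ∃ p, i + j = 2*p + 1 := ⟨(i+j-1)/2, by omega⟩
      obtain ⟨q, hq⟩ : ∃ q, i - j = 2*q + 1 := ⟨(i-j-1)/2, by omega⟩
      rw [Tval hφ (i-1) j (by omega) (by omega), Tval hφ (i+1) j (by omega) (by omega),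
          Tval hφ i (j-1) (by omega) (by omega), Tval hφ i (j+1) (by omega) (by omega)]
      rw [show (i-1+j)/2 = p by omega, show -1 - ((i-1)-j)/2 = -1-q by omega,
          show (i+1+j)/2 = p+1 by omega, show -1 - ((i+1)-j)/2 = -2-q by omega,
          show (i+(j-1))/2 = p by omega, show -1 - (i-(j-1))/2 = -2-q by omega,
          show (i+(j+1))/2 = p+1 by omega, show -1 - (i-(j+1))/2 = -1-q by omega]
      linear_combination two_self (φ p) + two_self (φ (p+1)) + two_self (φ (-1-q))
        + two_self (φ (-2-q))
  · simp only [Tmap]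
    rw [if_neg (fun hh : _ ∧ _ => by
      have := Int.odd_iff.mp h
      omega)]

lemma RTlem (hm : 1 ≤ m) (hn : 1 ≤ n) (hφ : φ ∈ Per (m+1) (n+1)) :
    Rmap m n (Tmap m n φ) = φ := by
  obtain ⟨hp1, hp2, hsym, hz⟩ := mem_Per.mp hφ
  have hp1' := periodic_mul hp1
  have hp2' := periodic_mul hp2
  funext t
  show Tmap m n φ (fold (m+1) (t+0)) (fold (n+1) (t-0)) = φ t
  rw [show t+0 = t from add_zero t, show t-0 = t from sub_zero t]
  by_cases hdm : (m+1) ∣ t + 1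
  · have hphit : φ t = 0 := by
      obtain ⟨k, hk⟩ := hdm
      have h := hp1' k (-1)
      rw [show (-1:ℤ) + k*(m+1) = t by linear_combination -hk] at h
      rw [h, hz]
    rw [hphit]
    simp only [Tmap]
    rw [if_neg]
    rintro ⟨hgg, -⟩
    have hb : 0 ≤ fold (m+1) t ∧ fold (m+1) t ≤ m - 1 ∧ _ ∧ _ := hgg
    rcases fold_dvd (m+1) t (by omega) hdm with hf | hf <;> omega
  · by_cases hdn : (n+1) ∣ t + 1
    · have hphit : φ t = 0 := by
        obtain ⟨k, hk⟩ := hdn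
        have h := hp2' k (-1)
        rw [show (-1:ℤ) + k*(n+1) = t by linear_combination -hk] at h
        rw [h, hz]
      rw [hphit]
      simp only [Tmap]
      rw [if_neg]
      rintro ⟨hgg, -⟩
      have hb : 0 ≤ fold (m+1) t ∧ fold (m+1) t ≤ m - 1 ∧ 0 ≤ fold (n+1) t ∧ fold (n+1) t ≤ n - 1 := hgg
      rcases fold_dvd (n+1) t (by omega) hdn with hf | hf <;> omega
    · -- both interior
      have hrm := fold_range (m+1) t (by omega)
      have hrn := fold_range (n+1) t (by omega)
      have hfm' : ¬(fold (m+1) t = -1 ∨ fold (m+1) t = (m+1) - 1) :=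
        fun h => hdm (fold_dvd' (m+1) t (by omega) h)
      have hfn' : ¬(fold (n+1) t = -1 ∨ fold (n+1) t = (n+1) - 1) :=
        fun h => hdn (fold_dvd' (n+1) t (by omega) h)
      have hg : InGrid m n (fold (m+1) t) (fold (n+1) t) :=
        ⟨by omega, by omega, by omega, by omega⟩
      have hparm := fold_parity (m+1) t (by omega)
      have hparn := fold_parity (n+1) t (by omega)
      simp only [Tmap]
      rw [if_pos (And.intro hg (by omega))]
      rcases fold_rep (m+1) t (by omega) with ⟨k, hfm⟩ | ⟨k, hfm⟩ <;>
        rcases fold_rep (n+1) t (by omega) with ⟨l, hfn⟩ | ⟨l, hfn⟩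
      · have hsum : fold (m+1) t + fold (n+1) t = 2*((t + k*(m+1)) + l*(n+1)) := by
          linear_combination hfm + hfn
        have hdiff : fold (m+1) t - fold (n+1) t = 2*(((-1 + k*(m+1)) + -l*(n+1)) - -1) := by
          linear_combination hfm - hfn
        rw [hsum, hdiff, Int.mul_ediv_cancel_left _ two_ne_zero,
            Int.mul_ediv_cancel_left _ two_ne_zero, hp2' l _, hp1' k t,
            show -1 - ((-1 + k*(m+1)) + -l*(n+1) - -1) = (-1 + -k*(m+1)) + l*(n+1) by ring,
            hp2' l _, hp1' (-k) (-1), hz, add_zero]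
      · have hsum : fold (m+1) t + fold (n+1) t = 2*((-1 + k*(m+1)) + l*(n+1)) := by
          linear_combination hfm + hfn
        have hdiff : fold (m+1) t - fold (n+1) t = 2*(((t + k*(m+1)) + -l*(n+1)) - -1) := by
          linear_combination hfm - hfn
        rw [hsum, hdiff, Int.mul_ediv_cancel_left _ two_ne_zero,
            Int.mul_ediv_cancel_left _ two_ne_zero, hp2' l _, hp1' k (-1), hz,
            show -1 - ((t + k*(m+1)) + -l*(n+1) - -1) = ((-2 - t) + -k*(m+1)) + l*(n+1) by ring,
            hp2' l _, hp1' (-k) (-2-t), hsym t, zero_add]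
      · have hsum : fold (m+1) t + fold (n+1) t = 2*((-1 + k*(m+1)) + l*(n+1)) := by
          linear_combination hfm + hfn
        have hdiff : fold (m+1) t - fold (n+1) t = 2*(((-2 - t + k*(m+1)) + -l*(n+1)) - -1) := by
          linear_combination hfm - hfn
        rw [hsum, hdiff, Int.mul_ediv_cancel_left _ two_ne_zero,
            Int.mul_ediv_cancel_left _ two_ne_zero, hp2' l _, hp1' k (-1), hz,
            show -1 - ((-2 - t + k*(m+1)) + -l*(n+1) - -1) = (t + -k*(m+1)) + l*(n+1) by ring,
            hp2' l _, hp1' (-k) t, zero_add]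
      · have hsum : fold (m+1) t + fold (n+1) t = 2*(((-2 - t) + k*(m+1)) + l*(n+1)) := by
          linear_combination hfm + hfn
        have hdiff : fold (m+1) t - fold (n+1) t = 2*(((-1 + k*(m+1)) + -l*(n+1)) - -1) := by
          linear_combination hfm - hfn
        rw [hsum, hdiff, Int.mul_ediv_cancel_left _ two_ne_zero,
            Int.mul_ediv_cancel_left _ two_ne_zero, hp2' l _, hp1' k (-2-t), hsym t,
            show -1 - ((-1 + k*(m+1)) + -l*(n+1) - -1) = (-1 + -k*(m+1)) + l*(n+1) by ring,
            hp2' l _, hp1' (-k) (-1), hz, add_zero]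

end main2

lemma Tmap_add (m n : ℤ) (φ ψ : ℤ → ZMod 2) :
    Tmap m n (φ + ψ) = Tmap m n φ + Tmap m n ψ := by
  funext i j
  simp only [Tmap, Pi.add_apply]
  split
  · ring
  · simp

lemma Tmap_smul (m n : ℤ) (c : ZMod 2) (φ : ℤ → ZMod 2) :
    Tmap m n (c • φ) = c • Tmap m n φ := by
  funext i j
  simp only [Tmap, Pi.smul_apply, smul_eq_mul]
  split
  · ring
  · simp

lemma kerBW_finrank_eq_Per (m n : ℤ) (hm : 1 ≤ m) (hn : 1 ≤ n) :
    Module.finrank (ZMod 2) (kerBW m n) = Module.finrank (ZMod 2) (Per (m+1) (n+1)) := by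
  refine (LinearEquiv.finrank_eq ?_).symm
  exact {
    toFun := fun φ => ⟨Tmap m n φ.1, Tmem hm hn φ.2⟩
    map_add' := fun φ ψ => Subtype.ext (by
      show Tmap m n (φ.1 + ψ.1) = Tmap m n φ.1 + Tmap m n ψ.1
      exact Tmap_add m n φ.1 ψ.1)
    map_smul' := fun c φ => Subtype.ext (by
      show Tmap m n (c • φ.1) = c • Tmap m n φ.1
      exact Tmap_smul m n c φ.1)
    invFun := fun v => ⟨Rmap m n v.1, Rmem hm hn v.2⟩
    left_inv := fun φ => Subtype.ext (RTlem hm hn φ.2)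
    right_inv := fun v => Subtype.ext (TRlem hm hn v.2)
  }

lemma Per_eq_gcd (M N : ℤ) :
    Per M N = Per (Int.gcd M N : ℤ) (Int.gcd M N : ℤ) := by
  ext φ
  rw [mem_Per, mem_Per]
  constructor
  · rintro ⟨h1, h2, h3, h4⟩
    have hg : ∀ t, φ (t + (Int.gcd M N : ℤ)) = φ t := by
      intro t
      have hb := Int.gcd_eq_gcd_ab M N
      calc φ (t + (Int.gcd M N : ℤ))
          = φ ((t + (Int.gcd M N : ℤ) + -(Int.gcdB M N)*N) + (Int.gcdB M N)*N) := by ring_nf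
        _ = φ (t + (Int.gcd M N : ℤ) + -(Int.gcdB M N)*N) := periodic_mul h2 _ _
        _ = φ ((t + -(Int.gcdA M N)*M + (Int.gcd M N : ℤ) + -(Int.gcdB M N)*N) + (Int.gcdA M N)*M) := by ring_nf
        _ = φ (t + -(Int.gcdA M N)*M + (Int.gcd M N : ℤ) + -(Int.gcdB M N)*N) := periodic_mul h1 _ _
        _ = φ t := by rw [show t + -(Int.gcdA M N)*M + (Int.gcd M N : ℤ) + -(Int.gcdB M N)*N = t by
              linear_combination hb]
    exact ⟨hg, hg, h3, h4⟩
  · rintro ⟨h1, -, h3, h4⟩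
    obtain ⟨kM, hkM⟩ : (Int.gcd M N : ℤ) ∣ M := Int.gcd_dvd_left M N
    obtain ⟨kN, hkN⟩ : (Int.gcd M N : ℤ) ∣ N := Int.gcd_dvd_right M N
    refine ⟨fun t => ?_, fun t => ?_, h3, h4⟩
    · have h := periodic_mul h1 kM t
      rwa [show t + kM * (Int.gcd M N : ℤ) = t + M by linear_combination -hkM] at h
    · have h := periodic_mul h1 kN t
      rwa [show t + kN * (Int.gcd M N : ℤ) = t + N by linear_combination -hkN] at h


/-- Theorem 3(iv) for ker BW: dim ker BW of the m×n grid equals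
dim ker BW of the c×c grid. -/
theorem kerBW_dim_eq_square (m n : ℤ) (hm : 2 ≤ m) (hn : 2 ≤ n)
    (c : ℕ) (hc : c = Int.gcd (m + 1) (n + 1) - 1) (hc1 : 1 ≤ c) :
    Module.finrank (ZMod 2) (kerBW m n) =
      Module.finrank (ZMod 2) (kerBW (c : ℤ) (c : ℤ)) := by
  have hcg : ((c:ℤ) + 1) = (Int.gcd (m+1) (n+1) : ℤ) := by
    have h : c + 1 = Int.gcd (m+1) (n+1) := by omega
    exact_mod_cast congrArg (Nat.cast : ℕ → ℤ) h
  have h1 := kerBW_finrank_eq_Per m n (by omega) (by omega)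
  have h2 := kerBW_finrank_eq_Per (c:ℤ) (c:ℤ) (by exact_mod_cast hc1) (by exact_mod_cast hc1)
  rw [h1, h2, Per_eq_gcd (m+1) (n+1), ← hcg]
end

section
/- (Theorem 3(iv) for ker WB.) Let m, n ≥ 2 be integers and c = gcd(m+1, n+1) − 1 with c ≥ 1. Then the 𝔽₂-dimension of the polarized kernel ker WB of the m×n rectangular grid equals the 𝔽₂-dimension of the polarized kernel ker WB of the c×c rectangular grid. -/
namespace KWB2

lemma harm_def (m n : ℤ) (v : ℤ → ℤ → ZMod 2) : v ∈ harm m n ↔ IsHarmonic m n v := Iff.rfl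

lemma vanishOn_def (P : ℤ → ℤ → Prop) (v : ℤ → ℤ → ZMod 2) :
    v ∈ vanishOn P ↔ ∀ i j : ℤ, P i j → v i j = 0 := Iff.rfl

abbrev V := ℤ → ZMod 2

/-- Box predicate: i ∈ [0, m-1]. -/
def box (m : ℕ) (i : ℤ) : Prop := 0 ≤ i ∧ i < (m : ℤ)

instance (m : ℕ) (i : ℤ) : Decidable (box m i) := inferInstanceAs (Decidable (_ ∧ _))

/-- Truncated path-adjacency operator. -/
def Ab (m : ℕ) (u : V) : V := fun i => if box m i then u (i-1) + u (i+1) else 0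

/-- Column evolution: col m x j is the j-th column of the harmonic extension with
column (-1) = 0 and column 0 = x. -/
def col (m : ℕ) (x : V) : ℕ → V
  | 0 => x
  | 1 => Ab m x
  | (j+2) => Ab m (col m x (j+1)) + col m x j

lemma col_zero (m : ℕ) (x : V) : col m x 0 = x := rfl
lemma col_one (m : ℕ) (x : V) : col m x 1 = Ab m x := rfl
lemma col_succ_succ (m : ℕ) (x : V) (j : ℕ) :
    col m x (j+2) = Ab m (col m x (j+1)) + col m x j := by
  rfl

def suppBox (m : ℕ) (x : V) : Prop := ∀ i, ¬ box m i → x i = 0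

lemma Ab_suppBox (m : ℕ) (u : V) : suppBox m (Ab m u) := by
  intro i hi; simp [Ab, hi]

lemma col_suppBox (m : ℕ) (x : V) (hx : suppBox m x) : ∀ j, suppBox m (col m x j)
  | 0 => hx
  | 1 => Ab_suppBox m x
  | (j+2) => by
      intro i hi
      have h1 := Ab_suppBox m (col m x (j+1)) i hi
      have h2 := col_suppBox m x hx j i hi
      simp [col_succ_succ, h1, h2]

lemma Ab_add (m : ℕ) (u v : V) : Ab m (u + v) = Ab m u + Ab m v := by
  funext i; simp only [Ab, Pi.add_apply]; split <;> ring

lemma col_add (m : ℕ) (x y : V) : ∀ j, col m (x + y) j = col m x j + col m y j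
  | 0 => rfl
  | 1 => Ab_add m x y
  | (j+2) => by
      simp only [col_succ_succ, col_add m x y (j+1), col_add m x y j, Ab_add]
      abel


lemma emod_eq_of (P a v : ℤ) (h1 : 0 ≤ v) (h2 : v < P) (h3 : P ∣ a - v) : a % P = v := by
  obtain ⟨k, hk⟩ := h3
  have ha : a = v + P * k := by linarith
  subst ha
  simp [Int.add_mul_emod_self_left, Int.emod_eq_of_lt h1 h2]

/-- Folding map: reduce i modulo the dihedral symmetry group of the interval [0,m-1]. -/
def fold (m : ℕ) (i : ℤ) : ℤ :=
  if i % (2*(m+1)) < m then i % (2*(m+1)) else 2*m - i % (2*(m+1))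

lemma fold_small (m : ℕ) (i : ℤ) (h0 : 0 ≤ i) (h1 : i < (m:ℤ)) : fold m i = i := by
  have : i % (2*((m:ℤ)+1)) = i := Int.emod_eq_of_lt h0 (by omega)
  simp only [fold]
  push_cast
  rw [this]
  simp [h1]

lemma fold_period (m : ℕ) (i : ℤ) : fold m (i + 2*(m+1)) = fold m i := by
  simp only [fold]
  have : (i + 2*((m:ℤ)+1)) % (2*((m:ℤ)+1)) = i % (2*((m:ℤ)+1)) := by
    simpa using Int.add_mul_emod_self_left (a := i) (b := 2*((m:ℤ)+1)) (c := 1)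
  push_cast
  rw [this]

lemma fold_reflect_neg (m : ℕ) (i : ℤ) : fold m (-2-i) = fold m i := by
  have hP : (0:ℤ) < 2*((m:ℤ)+1) := by positivity
  set P : ℤ := 2*((m:ℤ)+1) with hPdef
  have hr0 : 0 ≤ i % P := Int.emod_nonneg i (by omega)
  have hr1 : i % P < P := Int.emod_lt_of_pos i hP
  have hd : P ∣ i - i % P := Int.dvd_self_sub_of_emod_eq rfl
  set r := i % P with hrdef
  have key : (-2-i) % P = (if r = P - 1 then P - 1 else P - 2 - r) := by
    split
    · next h =>
      apply emod_eq_of P _ _ (by omega) (by omega)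
      obtain ⟨k, hk⟩ := hd
      exact ⟨-k - 2, by linarith [h]⟩
    · next h =>
      apply emod_eq_of P _ _ (by omega) (by omega)
      obtain ⟨k, hk⟩ := hd
      exact ⟨-k - 1, by linarith⟩
  simp only [fold]
  push_cast
  rw [← hPdef, key, ← hrdef]
  split_ifs <;> omega

lemma fold_reflect_m (m : ℕ) (i : ℤ) : fold m (2*m - i) = fold m i := by
  have h1 : (2*(m:ℤ) - i) = (-2 - i) + 2*((m:ℤ)+1) := by ring
  rw [h1]
  have h2 := fold_period m (-2-i)
  push_cast at h2 ⊢
  rw [h2, fold_reflect_neg]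

lemma fold_neg_one (m : ℕ) : fold m (-1) = -1 := by
  have hP : (0:ℤ) < 2*((m:ℤ)+1) := by positivity
  have h : (-1 : ℤ) % (2*((m:ℤ)+1)) = 2*(m:ℤ)+1 := by
    apply emod_eq_of _ _ _ (by omega) (by omega) ⟨-1, by ring⟩
  simp only [fold]
  push_cast
  rw [h]
  split_ifs <;> omega

lemma fold_m (m : ℕ) : fold m (m) = (m:ℤ) := by
  have h : ((m:ℤ)) % (2*((m:ℤ)+1)) = (m:ℤ) := Int.emod_eq_of_lt (by positivity) (by omega)
  simp only [fold]
  push_cast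
  rw [h]
  split_ifs <;> omega


section XH
variable (m : ℕ) (x : V)

/-- Periodized/reflected extension of x. -/
def xh : V := fun i => x (fold m i)

lemma xh_ext (i : ℤ) (h0 : -1 ≤ i) (h1 : i ≤ m) : xh m x i = x i := by
  rcases eq_or_lt_of_le h0 with h | h
  · simp [xh, ← h, fold_neg_one]
  · rcases eq_or_lt_of_le h1 with h' | h'
    · simp [xh, h', fold_m]
    · simp [xh, fold_small m i (by omega) (by omega)]

lemma xh_period (i : ℤ) : xh m x (i + 2*(m+1)) = xh m x i := by
  simp [xh, fold_period]

lemma xh_reflect_neg (i : ℤ) : xh m x (-2-i) = xh m x i := by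
  simp [xh, fold_reflect_neg]

lemma xh_reflect_m (i : ℤ) : xh m x (2*m - i) = xh m x i := by
  simp [xh, fold_reflect_m]

variable (hx : suppBox m x)
include hx

lemma xh_neg_one : xh m x (-1) = 0 := by
  rw [xh_ext m x (-1) (by omega) (by omega)]
  exact hx _ (by simp [box])

lemma xh_m : xh m x (m) = 0 := by
  rw [xh_ext m x m (by omega) (by omega)]
  exact hx _ (by simp [box])

end XH

section FF
variable (m : ℕ) (x : V)

/-- Partial sums of xh along diagonals: the free wave evolution. -/
lemma two0 : (2 : ZMod 2) = 0 := rfl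

lemma addself (a : ZMod 2) : a + a = 0 := by linear_combination a * two0

def F (j : ℕ) (i : ℤ) : ZMod 2 := ∑ k ∈ Finset.range (j+1), xh m x (i - j + 2*k)

lemma F_zero (i : ℤ) : F m x 0 i = xh m x i := by simp [F]

lemma F_succ (j : ℕ) (i : ℤ) : F m x (j+1) i = F m x j (i-1) + xh m x (i+j+1) := by
  rw [F, Finset.sum_range_succ, F]
  congr 1
  · apply Finset.sum_congr rfl; intro k _; congr 1; push_cast; ring
  · congr 1; push_cast; ring

lemma F_succ' (j : ℕ) (i : ℤ) : F m x (j+1) i = F m x j (i+1) + xh m x (i-j-1) := by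
  rw [F, Finset.sum_range_succ', F]
  congr 1
  · apply Finset.sum_congr rfl; intro k _; congr 1; push_cast; ring
  · congr 1; push_cast; ring

lemma F_one (i : ℤ) : F m x 1 i = xh m x (i-1) + xh m x (i+1) := by
  rw [F_succ, F_zero]
  congr 2
  ring

/-- The wave-equation identity for F (characteristic 2). -/
lemma F_wave (j : ℕ) (i : ℤ) :
    F m x (j+2) i = F m x (j+1) (i-1) + F m x (j+1) (i+1) + F m x j i := by
  have h1 : F m x (j+2) i = F m x (j+1) (i-1) + xh m x (i+(j+1)+1) := F_succ m x (j+1) i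
  have h2 : F m x (j+1) (i+1) = F m x j i + xh m x (i+1+j+1) := by
    have := F_succ m x j (i+1)
    rw [this]
    congr 1
    congr 1
    ring
  rw [h1, h2]
  have : (i + (↑j+1) + 1 : ℤ) = i+1+j+1 := by push_cast; ring
  rw [this]
  linear_combination (-(F m x j i)) * two0

/-- Both-ends stripping. -/
lemma F_step2 (j : ℕ) (t : ℤ) :
    F m x (j+2) t = F m x j t + xh m x (t-j-2) + xh m x (t+j+2) := by
  rw [F_succ m x (j+1) t, F_succ' m x j (t-1)]
  have e1 : (t - 1 - (j:ℤ) - 1) = t - j - 2 := by ring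
  have e2 : (t - 1 + 1 : ℤ) = t := by ring
  have e3 : (t + (j:ℤ)+1+1) = t + j + 2 := by push_cast; ring
  rw [e1, e2]
  push_cast
  ring

variable (hx : suppBox m x)
include hx

lemma F_neg_one : ∀ j, F m x j (-1) = 0 := by
  have base0 : F m x 0 (-1) = 0 := by rw [F_zero]; exact xh_neg_one m x hx
  have base1 : F m x 1 (-1) = 0 := by
    rw [F_one]
    have e1 : ((-1:ℤ) - 1) = -2 - 0 := by ring
    have e2 : ((-1:ℤ) + 1) = 0 := by ring
    rw [e1, e2, xh_reflect_neg]
    exact addself _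
  intro j
  induction j using Nat.strong_induction_on with
  | _ j ih =>
    match j with
    | 0 => exact base0
    | 1 => exact base1
    | (j+2) =>
      rw [F_step2, ih j (by omega)]
      have : ((-1:ℤ) - j - 2) = -2 - (-1 + j + 2) := by ring
      rw [this, xh_reflect_neg]
      linear_combination (xh m x (-1 + (j:ℤ) + 2)) * two0

lemma F_m : ∀ j, F m x j (m) = 0 := by
  have base0 : F m x 0 (m) = 0 := by rw [F_zero]; exact xh_m m x hx
  have base1 : F m x 1 (m) = 0 := by
    rw [F_one]
    have : ((m:ℤ) - 1) = 2*m - (m+1) := by ring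
    rw [this, xh_reflect_m]
    exact addself _
  intro j
  induction j using Nat.strong_induction_on with
  | _ j ih =>
    match j with
    | 0 => exact base0
    | 1 => exact base1
    | (j+2) =>
      rw [F_step2, ih j (by omega)]
      have : ((m:ℤ) - j - 2) = 2*m - (m + (j:ℤ) + 2) := by ring
      rw [this, xh_reflect_m]
      linear_combination (xh m x ((m:ℤ) + (j:ℤ) + 2)) * two0

/-- F at time m is 2-periodic in space. -/
lemma F_m_two_periodic (t : ℤ) : F m x m (t+2) = F m x m t := by
  have h1 := F_succ m x m (t+1)
  have h2 := F_succ' m x m (t+1)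
  have e1 : (t + 1 - 1 : ℤ) = t := by ring
  have e2 : (t + 1 + 1 : ℤ) = t + 2 := by ring
  have e3 : (t + 1 + (m:ℤ) + 1) = (t - m) + 2*(m+1) := by ring
  have e4 : (t + 1 - (m:ℤ) - 1) = t - m := by ring
  rw [e1, e3] at h1
  rw [e2, e4] at h2
  rw [xh_period m x (t - m)] at h1
  have := h1.symm.trans h2
  exact (add_right_cancel this).symm

/-- Full class sums of xh vanish: F m x m t = 0 for all t ≥ -2 (hence on [-1, m-1]). -/
lemma F_m_eq_zero (t : ℤ) (ht : -2 ≤ t) : F m x m t = 0 := by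
  have anch1 : F m x m (-1) = 0 := F_neg_one m x hx m
  have anch2 : F m x m (-2) = 0 := by
    have h := F_neg_one m x hx (m+1)
    rw [F_succ] at h
    have e : ((-1:ℤ) + m + 1) = (m:ℤ) := by ring
    rw [e, xh_m m x hx] at h
    have e2 : ((-1:ℤ) - 1) = -2 := by ring
    rw [e2] at h
    simpa using h
  have key : ∀ k : ℕ, F m x m (-2 + k) = 0 := by
    intro k
    induction k using Nat.strong_induction_on with
    | _ k ih =>
      match k with
      | 0 => simpa using anch2
      | 1 => simpa using anch1
      | (k+2) =>
        have : ((-2:ℤ) + (k+2:ℕ)) = (-2 + k) + 2 := by push_cast; ring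
        rw [this, F_m_two_periodic m x hx, ih k (by omega)]
  have : t = -2 + ((t+2).toNat : ℤ) := by omega
  rw [this]
  exact key _

end FF

/-- Closed formula for the column evolution in terms of free wave sums of xh. -/
lemma col_eq_F (m : ℕ) (x : V) (hx : suppBox m x) :
    ∀ j, ∀ i : ℤ, box m i → col m x j i = F m x j i := by
  have key : ∀ j, (∀ i : ℤ, box m i → col m x j i = F m x j i) ∧
      (∀ i : ℤ, box m i → col m x (j+1) i = F m x (j+1) i) := by
    intro j
    induction j with
    | zero =>
      constructor
      · intro i hi
        rw [F_zero, xh_ext m x i (by rcases hi with ⟨h1,h2⟩; omega)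
          (by rcases hi with ⟨h1,h2⟩; omega)]
        rfl
      · intro i hi
        show Ab m x i = _
        rw [F_one, Ab, if_pos hi,
          xh_ext m x (i-1) (by rcases hi with ⟨h1,h2⟩; omega) (by rcases hi with ⟨h1,h2⟩; omega),
          xh_ext m x (i+1) (by rcases hi with ⟨h1,h2⟩; omega) (by rcases hi with ⟨h1,h2⟩; omega)]
    | succ j ih =>
      refine ⟨ih.2, ?_⟩
      intro i hi
      rw [col_succ_succ, Pi.add_apply, F_wave, Ab, if_pos hi, ih.1 i hi]
      congr 1
      congr 1
      · by_cases h : box m (i-1)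
        · exact ih.2 _ h
        · have hz : col m x (j+1) (i-1) = 0 := col_suppBox m x hx (j+1) _ h
          have hi1 : i - 1 = -1 := by rcases hi with ⟨h1,h2⟩; simp [box] at h; omega
          rw [hz, hi1, F_neg_one m x hx]
      · by_cases h : box m (i+1)
        · exact ih.2 _ h
        · have hz : col m x (j+1) (i+1) = 0 := col_suppBox m x hx (j+1) _ h
          have hi1 : i + 1 = (m:ℤ) := by rcases hi with ⟨h1,h2⟩; simp [box] at h; omega
          rw [hz, hi1, F_m m x hx]
  exact fun j => (key j).1

/-- Reflection operator on box-supported vectors. -/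
def reflB (m : ℕ) (x : V) : V := fun i => if box m i then x (m - 1 - i) else 0

lemma reflB_suppBox (m : ℕ) (x : V) : suppBox m (reflB m x) := by
  intro i hi; simp [reflB, hi]

lemma reflB_add (m : ℕ) (u v : V) : reflB m (u + v) = reflB m u + reflB m v := by
  funext i; simp only [reflB, Pi.add_apply]; split <;> simp

lemma col_m_eq_zero (m : ℕ) (x : V) (hx : suppBox m x) : col m x m = 0 := by
  funext i
  by_cases h : box m i
  · rw [col_eq_F m x hx m i h, F_m_eq_zero m x hx i (by rcases h with ⟨h1,h2⟩; omega)]; rfl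
  · rw [col_suppBox m x hx m i h]; rfl

lemma col_m_succ (m : ℕ) (x : V) (hx : suppBox m x) : col m x (m+1) = reflB m x := by
  funext i
  by_cases h : box m i
  · rw [col_eq_F m x hx (m+1) i h, F_succ m x m i,
      F_m_eq_zero m x hx (i-1) (by rcases h with ⟨h1,h2⟩; omega)]
    have e : (i + (m:ℤ) + 1) = 2*(m:ℤ) - ((m:ℤ) - 1 - i) := by ring
    rw [e, xh_reflect_m m x, xh_ext m x _ (by rcases h with ⟨h1,h2⟩; omega)
      (by rcases h with ⟨h1,h2⟩; omega)]
    simp [reflB, h]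
  · rw [col_suppBox m x hx (m+1) i h]; simp [reflB, h]

lemma Ab_reflB_comm (m : ℕ) (u : V) (hu : suppBox m u) :
    Ab m (reflB m u) = reflB m (Ab m u) := by
  funext i
  by_cases h : box m i
  · simp only [Ab, reflB, if_pos h]
    have hbox : box m ((m:ℤ) - 1 - i) := by rcases h with ⟨h1,h2⟩; constructor <;> omega
    rw [if_pos hbox]
    by_cases h1 : box m (i-1)
    · by_cases h2 : box m (i+1)
      · rw [if_pos h1, if_pos h2]
        have e1 : (m:ℤ) - 1 - (i-1) = m - 1 - i + 1 := by ring
        have e2 : (m:ℤ) - 1 - (i+1) = m - 1 - i - 1 := by ring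
        rw [e1, e2]
        ring
      · rw [if_pos h1, if_neg h2]
        have e1 : (m:ℤ) - 1 - (i-1) = m - 1 - i + 1 := by ring
        rw [e1]
        have hz : u ((m:ℤ) - 1 - i - 1) = 0 := by
          apply hu; simp [box]; rcases h with ⟨a,b⟩; simp [box] at h2; omega
        rw [hz]
        ring
    · by_cases h2 : box m (i+1)
      · rw [if_neg h1, if_pos h2]
        have e2 : (m:ℤ) - 1 - (i+1) = m - 1 - i - 1 := by ring
        rw [e2]
        have hz : u ((m:ℤ) - 1 - i + 1) = 0 := by
          apply hu; simp [box]; rcases h with ⟨a,b⟩; simp [box] at h1; omega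
        rw [hz]
        ring
      · rw [if_neg h1, if_neg h2]
        have z1 : u ((m:ℤ) - 1 - i - 1) = 0 := by
          apply hu; simp [box]; rcases h with ⟨a,b⟩; simp [box] at h2; omega
        have z2 : u ((m:ℤ) - 1 - i + 1) = 0 := by
          apply hu; simp [box]; rcases h with ⟨a,b⟩; simp [box] at h1; omega
        rw [z1, z2]
  · simp only [Ab, reflB, if_neg h]

/-- The key reflection identity: evolution by m+1 steps is reflection. -/
lemma col_reflect (m : ℕ) (x : V) (hx : suppBox m x) :
    ∀ j, col m x (j + (m+1)) = reflB m (col m x j) := by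
  have key : ∀ j, col m x (j + (m+1)) = reflB m (col m x j) ∧
      col m x ((j+1) + (m+1)) = reflB m (col m x (j+1)) := by
    intro j
    induction j with
    | zero =>
      constructor
      · simpa [col_zero] using col_m_succ m x hx
      · have e : 1 + (m+1) = m + 2 := by omega
        rw [e, col_succ_succ, col_m_succ m x hx, col_m_eq_zero m x hx,
          Ab_reflB_comm m x hx]
        show reflB m (Ab m x) + 0 = reflB m (col m x 1)
        simp [col]
    | succ j ih =>
      refine ⟨ih.2, ?_⟩
      have e : (j+2) + (m+1) = (j + (m+1)) + 2 := by omega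
      rw [e, col_succ_succ]
      have e2 : j + (m+1) + 1 = (j+1) + (m+1) := by omega
      rw [e2, ih.2, ih.1, Ab_reflB_comm m (col m x (j+1)) (col_suppBox m x hx (j+1)),
        ← reflB_add, ← col_succ_succ]
  exact fun j => (key j).1

lemma reflB_eq_zero_iff (m : ℕ) (u : V) (hu : suppBox m u) : reflB m u = 0 ↔ u = 0 := by
  constructor
  · intro h
    funext i
    by_cases hb : box m i
    · have hbox : box m ((m:ℤ) - 1 - i) := by rcases hb with ⟨a,b⟩; constructor <;> omega
      have h2 := congrFun h ((m:ℤ) - 1 - i)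
      simp only [reflB, if_pos hbox, Pi.zero_apply] at h2
      have e : (m:ℤ) - 1 - ((m:ℤ) - 1 - i) = i := by ring
      rwa [e] at h2
    · rw [hu i hb]; rfl
  · intro h; rw [h]; funext i; simp [reflB]

lemma col_shift_zero_iff (m : ℕ) (x : V) (hx : suppBox m x) (j : ℕ) :
    col m x (j + (m+1)) = 0 ↔ col m x j = 0 := by
  rw [col_reflect m x hx j]
  exact reflB_eq_zero_iff m (col m x j) (col_suppBox m x hx j)

lemma col_mod_zero_iff (m : ℕ) (x : V) (hx : suppBox m x) :
    ∀ n : ℕ, (col m x n = 0 ↔ col m x (n % (m+1)) = 0) := by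
  intro n
  induction n using Nat.strong_induction_on with
  | _ n ih =>
    by_cases h : n < m + 1
    · rw [Nat.mod_eq_of_lt h]
    · have e : n = (n - (m+1)) + (m+1) := by omega
      have e2 : n % (m+1) = (n - (m+1)) % (m+1) := by
        conv_lhs => rw [e]
        simp [Nat.add_mod_right]
      rw [e2, ← ih (n - (m+1)) (by omega)]
      conv_lhs => rw [e]
      exact col_shift_zero_iff m x hx _

lemma Ab_smul (m : ℕ) (c : ZMod 2) (u : V) : Ab m (c • u) = c • Ab m u := by
  funext i; simp only [Ab, Pi.smul_apply, smul_eq_mul]; split <;> ring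

lemma col_smul (m : ℕ) (c : ZMod 2) (x : V) : ∀ j, col m (c • x) j = c • col m x j
  | 0 => rfl
  | 1 => Ab_smul m c x
  | (j+2) => by
      simp only [col_succ_succ, col_smul m c x (j+1), col_smul m c x j, Ab_smul, smul_add]

/-- Odd support (vanishing at even integers). -/
def oddOnly (x : V) : Prop := ∀ i : ℤ, Even i → x i = 0

lemma col_parity (m : ℕ) (x : V) (hxo : oddOnly x) :
    ∀ (j : ℕ) (i : ℤ), Even (i + (j:ℤ)) → col m x j i = 0 := by
  have key : ∀ (j : ℕ), (∀ i : ℤ, Even (i + (j:ℤ)) → col m x j i = 0) ∧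
      (∀ i : ℤ, Even (i + ((j:ℤ)+1)) → col m x (j+1) i = 0) := by
    intro j
    induction j with
    | zero =>
      constructor
      · intro i hi; exact hxo i (by simpa using hi)
      · intro i hi
        show Ab m x i = 0
        simp only [Ab]
        split
        · rw [hxo (i-1) (by rcases hi with ⟨k,hk⟩; exact ⟨k-1, by omega⟩),
            hxo (i+1) (by rcases hi with ⟨k,hk⟩; exact ⟨k, by omega⟩)]
          exact addself 0
        · rfl
    | succ j ih =>
      refine ⟨ih.2, ?_⟩
      intro i hi
      rw [col_succ_succ, Pi.add_apply]
      have h1 : col m x j i = 0 := by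
        apply ih.1
        rcases hi with ⟨k,hk⟩; exact ⟨k-1, by push_cast at hk ⊢; omega⟩
      have h2 : Ab m (col m x (j+1)) i = 0 := by
        simp only [Ab]
        split
        · rw [ih.2 (i-1) (by rcases hi with ⟨k,hk⟩; exact ⟨k-1, by push_cast at hk ⊢; omega⟩),
            ih.2 (i+1) (by rcases hi with ⟨k,hk⟩; exact ⟨k, by push_cast at hk ⊢; omega⟩)]
          exact addself 0
        · rfl
      rw [h1, h2]
      exact addself 0
  exact fun j => (key j).1

/-- The space of initial columns whose evolution dies at time n. -/
def X (m n : ℕ) : Submodule (ZMod 2) V where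
  carrier := {x | suppBox m x ∧ oddOnly x ∧ col m x n = 0}
  zero_mem' := by
    have hz : ∀ j, col m (0 : V) j = 0 := by
      intro j
      have := col_add m 0 0 j
      simp only [add_zero] at this
      -- col 0 = col 0 + col 0 → col 0 = 0
      have h2 : col m (0:V) j = col m (0:V) j + col m (0:V) j := by
        conv_lhs => rw [show (0:V) = 0 + 0 by simp]
        rw [col_add]
      funext i
      have := congrFun h2 i
      have h3 := addself (col m (0:V) j i)
      simp only [Pi.add_apply] at this
      -- a = a + a and a + a = 0
      rw [this, h3]
      rfl
    exact ⟨fun i _ => rfl, fun i _ => rfl, hz _⟩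
  add_mem' := by
    rintro a b ⟨ha1, ha2, ha3⟩ ⟨hb1, hb2, hb3⟩
    refine ⟨fun i hi => ?_, fun i hi => ?_, ?_⟩
    · simp [Pi.add_apply, ha1 i hi, hb1 i hi]
    · simp [Pi.add_apply, ha2 i hi, hb2 i hi]
    · rw [col_add, ha3, hb3]; simp
  smul_mem' := by
    rintro c a ⟨ha1, ha2, ha3⟩
    refine ⟨fun i hi => ?_, fun i hi => ?_, ?_⟩
    · simp [Pi.smul_apply, ha1 i hi]
    · simp [Pi.smul_apply, ha2 i hi]
    · rw [col_smul, ha3]; simp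

/-- Build the grid function from an initial column. -/
def toGrid (m n : ℕ) (x : V) : ℤ → ℤ → ZMod 2 :=
  fun i j => if 0 ≤ j ∧ j < (n:ℕ) then col m x j.toNat i else 0

lemma col_rec (m : ℕ) (x : V) (j : ℕ) (i : ℤ) (hb : box m i) :
    col m x (j+1) i
      = col m x j (i-1) + col m x j (i+1) + (if j = 0 then 0 else col m x (j-1) i) := by
  match j with
  | 0 => simp only [col, Ab, if_pos hb, reduceIte, add_zero]
  | (j+1) =>
    rw [col_succ_succ, Pi.add_apply]
    simp only [Ab, if_pos hb, Nat.add_sub_cancel]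
    simp

theorem toGrid_mem (m n : ℕ) (hn : 1 ≤ n) (x : V) (hx : x ∈ X m n) :
    toGrid m n x ∈ kerWB (m:ℤ) (n:ℤ) := by
  obtain ⟨hs, ho, hcn⟩ := hx
  have hgrid : ∀ i j : ℤ, InGrid (m:ℤ) (n:ℤ) i j ↔ (box m i ∧ 0 ≤ j ∧ j < (n:ℤ)) := by
    intro i j; unfold InGrid box; omega
  have hval : ∀ (i j : ℤ), 0 ≤ j → j < (n:ℤ) → toGrid m n x i j = col m x j.toNat i := by
    intro i j h1 h2; simp only [toGrid]; rw [if_pos ⟨h1, by exact_mod_cast h2⟩]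
  -- the value at column n (as integer) vanishes too
  have hvaln : ∀ (i j : ℤ), 0 ≤ j → j ≤ (n:ℤ) → toGrid m n x i j = col m x j.toNat i := by
    intro i j h1 h2
    rcases lt_or_eq_of_le h2 with h | h
    · exact hval i j h1 h
    · simp only [toGrid]
      rw [if_neg (by omega)]
      have : j.toNat = n := by omega
      rw [this, hcn]
      rfl
  refine Submodule.mem_inf.mpr ⟨?_, ?_⟩
  · rw [harm_def]
    constructor
    · intro i j hij
      rw [hgrid] at hij
      simp only [toGrid]
      split
      · next h => exact col_suppBox m x hs j.toNat i (fun hb => hij ⟨hb, h.1, h.2⟩)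
      · rfl
    · intro i j hij
      rw [hgrid] at hij
      obtain ⟨hb, hj0, hjn⟩ := hij
      have e1 : toGrid m n x (i-1) j = col m x j.toNat (i-1) := hval _ _ hj0 hjn
      have e2 : toGrid m n x (i+1) j = col m x j.toNat (i+1) := hval _ _ hj0 hjn
      have e4 : toGrid m n x i (j+1) = col m x (j.toNat + 1) i := by
        rw [hvaln i (j+1) (by omega) (by omega)]
        congr 1
        omega
      rw [e1, e2, e4]
      by_cases hj : j = 0
      · subst hj
        have e3 : toGrid m n x i (0-1 : ℤ) = 0 := by
          simp only [toGrid]; rw [if_neg (by omega)]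
        rw [e3]
        have hrec := col_rec m x 0 i hb
        simp only [reduceIte, add_zero] at hrec
        show col m x 0 (i-1) + col m x 0 (i+1) + 0 + col m x (0+1) i = 0
        rw [hrec, add_zero]
        exact addself _
      · have e3 : toGrid m n x i (j-1) = col m x (j.toNat - 1) i := by
          rw [hvaln i (j-1) (by omega) (by omega)]
          congr 1
          omega
        rw [e3]
        rw [col_rec m x j.toNat i hb, if_neg (by omega)]
        generalize col m x j.toNat (i-1) + col m x j.toNat (i+1) + col m x (j.toNat-1) i = a
        exact addself a
  · rw [vanishOn_def]
    intro i j hev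
    simp only [toGrid]
    split
    · next h =>
      apply col_parity m x ho
      have : (j.toNat : ℤ) = j := by omega
      rw [this]
      exact hev
    · rfl

theorem grid_to_X (m n : ℕ) (hn : 1 ≤ n) (v : ℤ → ℤ → ZMod 2)
    (hv : v ∈ kerWB (m:ℤ) (n:ℤ)) :
    (fun i => v i 0) ∈ X m n ∧ toGrid m n (fun i => v i 0) = v := by
  obtain ⟨hharm, hblack⟩ := Submodule.mem_inf.mp hv
  rw [harm_def] at hharm
  rw [vanishOn_def] at hblack
  obtain ⟨hout, heq⟩ := hharm
  set x : V := fun i => v i 0 with hxdef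
  have hgrid : ∀ i j : ℤ, InGrid (m:ℤ) (n:ℤ) i j ↔ (box m i ∧ 0 ≤ j ∧ j < (n:ℤ)) := by
    intro i j; unfold InGrid box; omega
  have hs : suppBox m x := by
    intro i hi
    apply hout
    rw [hgrid]
    tauto
  have ho : oddOnly x := by
    intro i hi
    apply hblack
    simpa using hi
  -- the main claim
  have claim : ∀ j : ℕ, j ≤ n → ∀ i : ℤ, col m x j i = v i (j:ℤ) := by
    have key : ∀ j : ℕ, (j ≤ n → ∀ i : ℤ, col m x j i = v i (j:ℤ)) ∧
        (j+1 ≤ n → ∀ i : ℤ, col m x (j+1) i = v i ((j:ℤ)+1)) := by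
      intro j
      induction j with
      | zero =>
        refine ⟨fun _ i => rfl, fun h1 i => ?_⟩
        by_cases hb : box m i
        · have hg : InGrid (m:ℤ) (n:ℤ) i 0 := by rw [hgrid]; exact ⟨hb, by omega, by omega⟩
          have := heq i 0 hg
          have hneg : v i (0-1 : ℤ) = 0 := by
            apply hout; rw [hgrid]; omega
          rw [hneg] at this
          -- v(i-1,0) + v(i+1,0) + 0 + v(i,1) = 0
          rw [col_rec m x 0 i hb]
          simp only [reduceIte, add_zero]
          -- col 0 = x = v · 0
          show v (i-1) 0 + v (i+1) 0 = v i (0+1 : ℤ)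
          have h2 := addself (v i (0+1:ℤ))
          calc v (i-1) 0 + v (i+1) 0
              = v (i-1) 0 + v (i+1) 0 + 0 + (v i (0+1:ℤ) + v i (0+1:ℤ)) := by rw [h2]; ring
            _ = (v (i-1) 0 + v (i+1) 0 + 0 + v i (0+1:ℤ)) + v i (0+1:ℤ) := by ring
            _ = 0 + v i (0+1:ℤ) := by rw [this]
            _ = v i (0+1:ℤ) := by ring
        · rw [col_suppBox m x hs 1 i hb, hout i _ (by rw [hgrid]; tauto)]
      | succ j ih =>
        refine ⟨fun h => ih.2 (by omega), fun h1 i => ?_⟩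
        by_cases hb : box m i
        · have hg : InGrid (m:ℤ) (n:ℤ) i ((j:ℤ)+1) := by rw [hgrid]; constructor; exact hb; omega
          have heqj := heq i ((j:ℤ)+1) hg
          rw [col_rec m x (j+1) i hb, if_neg (by omega)]
          have c1 : col m x (j+1) (i-1) = v (i-1) ((j:ℤ)+1) := ih.2 (by omega) (i-1)
          have c2 : col m x (j+1) (i+1) = v (i+1) ((j:ℤ)+1) := ih.2 (by omega) (i+1)
          have c3 : col m x (j+1-1) i = v i ((j:ℤ)) := by
            have : j + 1 - 1 = j := by omega
            rw [this]
            exact ih.1 (by omega) i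
          rw [c1, c2, c3]
          have e1 : ((j:ℤ)+1-1) = (j:ℤ) := by ring
          rw [e1] at heqj
          have h2 := addself (v i ((j:ℤ)+1+1))
          have egoal : ((j+1 : ℕ) : ℤ) + 1 = (j:ℤ)+1+1 := by push_cast; ring
          rw [egoal]
          calc v (i-1) ((j:ℤ)+1) + v (i+1) ((j:ℤ)+1) + v i (j:ℤ)
              = (v (i-1) ((j:ℤ)+1) + v (i+1) ((j:ℤ)+1) + v i (j:ℤ) + v i ((j:ℤ)+1+1))
                + v i ((j:ℤ)+1+1) := by linear_combination -h2
            _ = 0 + v i ((j:ℤ)+1+1) := by rw [heqj]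
            _ = v i ((j:ℤ)+1+1) := by ring
        · rw [col_suppBox m x hs (j+2) i hb, hout i _ (by rw [hgrid]; tauto)]
    exact fun j hj => match j, hj with
      | 0, _ => (key 0).1 (by omega)
      | (j+1), hj => (key j).2 hj
  have hcn : col m x n = 0 := by
    funext i
    rw [claim n (le_refl n) i]
    apply hout
    rw [hgrid]
    omega
  refine ⟨⟨hs, ho, hcn⟩, ?_⟩
  funext i j
  simp only [toGrid]
  split
  · next h =>
    rw [claim j.toNat (by omega) i]
    congr 1
    omega
  · next h =>
    symm
    apply hout
    rw [hgrid]
    omega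



lemma mem_X (m n : ℕ) (x : V) :
    x ∈ X m n ↔ (suppBox m x ∧ oddOnly x ∧ col m x n = 0) := Iff.rfl

lemma toGrid_def (m n : ℕ) (x : V) :
    toGrid m n x = fun (i j : ℤ) => if 0 ≤ j ∧ j < ((n:ℕ):ℤ) then col m x j.toNat i else 0 := rfl

/-- The fundamental linear equivalence between initial-column space and kerWB. -/
noncomputable def equivXkerWB (m n : ℕ) (hn : 1 ≤ n) :
    X m n ≃ₗ[ZMod 2] kerWB (m:ℤ) (n:ℤ) where
  toFun x := ⟨toGrid m n x.1, toGrid_mem m n hn x.1 x.2⟩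
  invFun v := ⟨fun i => v.1 i 0, (grid_to_X m n hn v.1 v.2).1⟩
  map_add' x y := by
    ext i j
    simp only [toGrid_def, Submodule.coe_add, Pi.add_apply, AddMemClass.mk_add_mk]
    rw [col_add]
    split <;> simp
  map_smul' c x := by
    ext i j
    simp only [toGrid_def, Submodule.coe_smul, Pi.smul_apply, RingHom.id_apply,
      SetLike.mk_smul_mk]
    rw [col_smul]
    split <;> simp
  left_inv x := by
    ext i
    simp only [toGrid_def]
    rw [if_pos ⟨le_refl 0, by exact_mod_cast hn⟩]
    rfl
  right_inv v := by
    ext i j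
    exact congrFun (congrFun ((grid_to_X m n hn v.1 v.2).2) i) j

lemma X_mod (m n : ℕ) : X m n = X m (n % (m+1)) := by
  ext x
  rw [mem_X, mem_X]
  constructor
  · rintro ⟨h1, h2, h3⟩
    exact ⟨h1, h2, (col_mod_zero_iff m x h1 n).mp h3⟩
  · rintro ⟨h1, h2, h3⟩
    exact ⟨h1, h2, (col_mod_zero_iff m x h1 n).mpr h3⟩

lemma transpose_mem (a b : ℤ) (v : ℤ → ℤ → ZMod 2) (hv : v ∈ kerWB a b) :
    (fun i j => v j i) ∈ kerWB b a := by
  obtain ⟨hharm, hblack⟩ := Submodule.mem_inf.mp hv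
  rw [harm_def] at hharm
  rw [vanishOn_def] at hblack
  obtain ⟨hout, heq⟩ := hharm
  refine Submodule.mem_inf.mpr ⟨?_, ?_⟩
  · rw [harm_def]
    constructor
    · intro i j hij
      exact hout j i (fun hg => hij (by unfold InGrid at hg ⊢; tauto))
    · intro i j hij
      have hg : InGrid a b j i := by unfold InGrid at hij ⊢; tauto
      have := heq j i hg
      linear_combination this
  · rw [vanishOn_def]
    intro i j hev
    exact hblack j i (by rwa [add_comm])

/-- Transposition equivalence. -/
noncomputable def transposeEquiv (a b : ℤ) : kerWB a b ≃ₗ[ZMod 2] kerWB b a where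
  toFun v := ⟨fun i j => v.1 j i, transpose_mem a b v.1 v.2⟩
  invFun v := ⟨fun i j => v.1 j i, transpose_mem b a v.1 v.2⟩
  map_add' x y := rfl
  map_smul' c x := rfl
  left_inv x := rfl
  right_inv x := rfl

lemma finrank_reduce (m n : ℕ) (hn : 1 ≤ n) (hr : 1 ≤ n % (m+1)) :
    Module.finrank (ZMod 2) (kerWB (m:ℤ) (n:ℤ)) =
      Module.finrank (ZMod 2) (kerWB (m:ℤ) ((n % (m+1) : ℕ):ℤ)) := by
  rw [← LinearEquiv.finrank_eq (equivXkerWB m n hn), X_mod m n,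
    LinearEquiv.finrank_eq (equivXkerWB m (n % (m+1)) hr)]

lemma gcd_red (m n : ℕ) : Nat.gcd (m+1) (n+1) = Nat.gcd (m+1) (n % (m+1) + 1) := by
  conv_lhs => rw [show n + 1 = (n % (m+1) + 1) + (n / (m+1)) * (m+1) by
    have := Nat.div_add_mod' n (m+1); omega]
  exact Nat.gcd_add_mul_right_right (m+1) (n % (m+1) + 1) (n / (m+1))

lemma main : ∀ s m n : ℕ, m + n = s → 1 ≤ m → 1 ≤ n →
    2 ≤ Nat.gcd (m+1) (n+1) →
    Module.finrank (ZMod 2) (kerWB (m:ℤ) (n:ℤ)) =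
      Module.finrank (ZMod 2)
        (kerWB ((Nat.gcd (m+1) (n+1) - 1 : ℕ):ℤ) ((Nat.gcd (m+1) (n+1) - 1 : ℕ):ℤ)) := by
  intro s
  induction s using Nat.strong_induction_on with
  | _ s ih =>
    intro m n hs hm hn hg
    rcases lt_trichotomy m n with hlt | heq | hgt
    · -- m < n : reduce n
      set r := n % (m+1) with hrdef
      have hr1 : 1 ≤ r := by
        rcases Nat.eq_zero_or_pos r with h0 | h
        · exfalso
          have hdvd : (m+1) ∣ n := Nat.dvd_of_mod_eq_zero (hrdef.symm.trans h0)
          have h2 : Nat.gcd (m+1) (n+1) ∣ n := dvd_trans (Nat.gcd_dvd_left _ _) hdvd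
          have h3 : Nat.gcd (m+1) (n+1) ∣ n + 1 := Nat.gcd_dvd_right _ _
          have h4 : Nat.gcd (m+1) (n+1) ∣ 1 := by
            have := Nat.dvd_sub h3 h2
            simpa using this
          have h5 := Nat.dvd_one.mp h4
          omega
        · exact h
      have hred := finrank_reduce m n hn hr1
      rw [hred, gcd_red m n]
      have hrm : r ≤ m := by
        have := Nat.mod_lt n (show 0 < m + 1 by omega)
        omega
      exact ih (m + r) (by omega) m r rfl hm hr1 (by rw [← gcd_red]; exact hg)
    · -- m = n
      subst heq
      rw [Nat.gcd_self]
      have : m + 1 - 1 = m := by omega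
      rw [this]
    · -- n < m : transpose then reduce m
      have htr : Module.finrank (ZMod 2) (kerWB (m:ℤ) (n:ℤ)) =
          Module.finrank (ZMod 2) (kerWB (n:ℤ) (m:ℤ)) :=
        LinearEquiv.finrank_eq (transposeEquiv (m:ℤ) (n:ℤ))
      set r := m % (n+1) with hrdef
      have hr1 : 1 ≤ r := by
        rcases Nat.eq_zero_or_pos r with h0 | h
        · exfalso
          have hdvd : (n+1) ∣ m := Nat.dvd_of_mod_eq_zero (hrdef.symm.trans h0)
          have h2 : Nat.gcd (n+1) (m+1) ∣ m := dvd_trans (Nat.gcd_dvd_left _ _) hdvd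
          have h3 : Nat.gcd (n+1) (m+1) ∣ m + 1 := Nat.gcd_dvd_right _ _
          have h4 : Nat.gcd (n+1) (m+1) ∣ 1 := by
            have := Nat.dvd_sub h3 h2
            simpa using this
          have h5 := Nat.dvd_one.mp h4
          rw [Nat.gcd_comm] at hg
          omega
        · exact h
      have hred := finrank_reduce n m hm hr1
      rw [htr, hred]
      have hgc : Nat.gcd (m+1) (n+1) = Nat.gcd (n+1) (r+1) := by
        rw [Nat.gcd_comm, gcd_red n m]  -- careful: gcd_red n m : gcd (n+1)(m+1) = gcd (n+1)(m % (n+1) + 1)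
      rw [hgc]
      have hrn : r ≤ n := by
        have := Nat.mod_lt m (show 0 < n + 1 by omega)
        omega
      exact ih (n + r) (by omega) n r rfl hn hr1 (by rw [← gcd_red]; rw [Nat.gcd_comm]; exact hg)


end KWB2

/-- Theorem 3(iv) for ker WB: dim ker WB of the m×n grid equals
dim ker WB of the c×c grid. -/
theorem kerWB_dim_eq_square (m n : ℤ) (hm : 2 ≤ m) (hn : 2 ≤ n)
    (c : ℕ) (hc : c = Int.gcd (m + 1) (n + 1) - 1) (hc1 : 1 ≤ c) :
    Module.finrank (ZMod 2) (kerWB m n) =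
      Module.finrank (ZMod 2) (kerWB (c : ℤ) (c : ℤ)) := by
  set mN := m.toNat with hmN
  set nN := n.toNat with hnN
  have hmm : (mN : ℤ) = m := by omega
  have hnn : (nN : ℤ) = n := by omega
  have hgcd : Int.gcd (m+1) (n+1) = Nat.gcd (mN+1) (nN+1) := by
    unfold Int.gcd
    congr 1 <;> omega
  have hg2 : 2 ≤ Nat.gcd (mN+1) (nN+1) := by omega
  have hc' : c = Nat.gcd (mN+1) (nN+1) - 1 := by omega
  have hmain := KWB2.main (mN + nN) mN nN rfl (by omega) (by omega) hg2
  rw [← hmm, ← hnn]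
  rw [hmain, hc']
end

section
/- (Proposition 4, black part.) Let c ≥ 1 be an integer. The 𝔽₂-dimension of the polarized kernel ker BW of the c×c square grid satisfies 2·dim ker BW_{c,c} = c + (c mod 2). -/
namespace Aux


def Gfun (g : ℤ → ZMod 2) (i j : ℤ) : ZMod 2 :=
  g ((i + j) / 2) + g ((i - j - 2) / 2)

lemma z2_add_self (x : ZMod 2) : x + x = 0 := CharTwo.add_self_eq_zero x

lemma Gsum (g : ℤ → ZMod 2) (i j : ℤ) :
    Gfun g (i-1) j + Gfun g (i+1) j + Gfun g i (j-1) + Gfun g i (j+1) = 0 := by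
  unfold Gfun
  have e1 : i - 1 + j = i + (j - 1) := by ring
  have e2 : i - 1 - j - 2 = i - (j+1) - 2 := by ring
  have e3 : i + 1 + j = i + (j+1) := by ring
  have e4 : i + 1 - j - 2 = i - (j-1) - 2 := by ring
  rw [e1, e2, e3, e4]
  have h : ∀ x y z w : ZMod 2, x+y+(z+w)+(x+w)+(z+y) = 0 := by decide
  exact h _ _ _ _

lemma Gbot (g : ℤ → ZMod 2) (i : ℤ) : Gfun g i (-1) = 0 := by
  unfold Gfun
  have : i - (-1) - 2 = i + (-1) := by ring
  rw [this]; exact z2_add_self _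

lemma Gleft (g : ℤ → ZMod 2) (hsym : ∀ x, g (-2 - x) = g x) (j : ℤ) (hj : Odd j) :
    Gfun g (-1) j = 0 := by
  unfold Gfun
  obtain ⟨m, hm⟩ := hj
  have e1 : (-1 + j) / 2 = m := by omega
  have e2 : (-1 - j - 2) / 2 = -2 - m := by omega
  rw [e1, e2, hsym]; exact z2_add_self _

lemma Gtop (c : ℤ) (g : ℤ → ZMod 2) (hper : ∀ x, g (x + (c+1)) = g x) (i : ℤ)
    (h : Even (i + c)) : Gfun g i c = 0 := by
  unfold Gfun
  obtain ⟨m, hm⟩ := h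
  have e1 : (i + c) / 2 = m := by omega
  have e2 : (i - c - 2) / 2 = m - c - 1 := by omega
  have h4 : g m = g (m - c - 1) := by
    have := hper (m - c - 1)
    rw [show m - c - 1 + (c+1) = m by ring] at this
    exact this
  rw [e1, e2, h4]; exact z2_add_self _

lemma Gright (c : ℤ) (g : ℤ → ZMod 2) (hsym : ∀ x, g (-2 - x) = g x)
    (hper : ∀ x, g (x + (c+1)) = g x) (j : ℤ) (h : Even (c + j)) :
    Gfun g c j = 0 := by
  unfold Gfun
  obtain ⟨m, hm⟩ := h
  have e1 : (c + j) / 2 = m := by omega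
  have e2 : (c - j - 2) / 2 = c - m - 1 := by omega
  have h4 : g m = g (c - m - 1) := by
    have := hper (-2 - (c - m - 1))
    rw [show -2 - (c - m - 1) + (c+1) = m by ring, hsym] at this
    exact this
  rw [e1, e2, h4]; exact z2_add_self _


def extFun (c : ℤ) (g : ℤ → ZMod 2) : ℤ → ℤ → ZMod 2 :=
  fun i j => if InGrid c c i j ∧ Even (i + j) then Gfun g i j else 0

lemma ext_mem (c : ℤ) (g : ℤ → ZMod 2)
    (hsym : ∀ x, g (-2 - x) = g x) (hper : ∀ x, g (x + (c+1)) = g x) :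
    extFun c g ∈ kerBW c c := by
  rw [kerBW, Submodule.mem_inf]
  refine ⟨(⟨?_, ?_⟩ : IsHarmonic c c (extFun c g)), ?_⟩
  · intro i j h
    exact if_neg (fun hh => h hh.1)
  · intro i j hij
    by_cases hpar : Even (i + j)
    · obtain ⟨m, hm⟩ := hpar
      have z : ∀ a b : ℤ, ¬ Even (a + b) → extFun c g a b = 0 := fun a b h =>
        if_neg (fun hh => h hh.2)
      rw [z (i-1) j (by rintro ⟨p,hp⟩; omega), z (i+1) j (by rintro ⟨p,hp⟩; omega),
          z i (j-1) (by rintro ⟨p,hp⟩; omega), z i (j+1) (by rintro ⟨p,hp⟩; omega)]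
      simp
    · have hodd : Odd (i + j) := Int.not_even_iff_odd.mp hpar
      obtain ⟨m, hm⟩ := hodd
      obtain ⟨hi0, hi1, hj0, hj1⟩ := hij
      have n1 : extFun c g (i-1) j = Gfun g (i-1) j := by
        by_cases hin : InGrid c c (i-1) j
        · exact if_pos ⟨hin, ⟨m, by omega⟩⟩
        · rw [extFun, if_neg (fun hh => hin hh.1)]
          have hi : i = 0 := by unfold InGrid at hin; omega
          subst hi
          rw [show (0:ℤ)-1 = -1 by ring]
          exact (Gleft g hsym j ⟨m, by omega⟩).symm
      have n2 : extFun c g (i+1) j = Gfun g (i+1) j := by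
        by_cases hin : InGrid c c (i+1) j
        · exact if_pos ⟨hin, ⟨m+1, by omega⟩⟩
        · rw [extFun, if_neg (fun hh => hin hh.1)]
          have hi : i + 1 = c := by unfold InGrid at hin; omega
          rw [hi]
          exact (Gright c g hsym hper j ⟨m+1, by omega⟩).symm
      have n3 : extFun c g i (j-1) = Gfun g i (j-1) := by
        by_cases hin : InGrid c c i (j-1)
        · exact if_pos ⟨hin, ⟨m, by omega⟩⟩
        · rw [extFun, if_neg (fun hh => hin hh.1)]
          have hj : j = 0 := by unfold InGrid at hin; omega
          subst hj
          rw [show (0:ℤ)-1 = -1 by ring]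
          exact (Gbot g i).symm
      have n4 : extFun c g i (j+1) = Gfun g i (j+1) := by
        by_cases hin : InGrid c c i (j+1)
        · exact if_pos ⟨hin, ⟨m+1, by omega⟩⟩
        · rw [extFun, if_neg (fun hh => hin hh.1)]
          have hj : j + 1 = c := by unfold InGrid at hin; omega
          rw [hj]
          exact (Gtop c g hper i ⟨m+1, by omega⟩).symm
      show extFun c g (i-1) j + extFun c g (i+1) j + extFun c g i (j-1)
            + extFun c g i (j+1) = 0
      rw [n1, n2, n3, n4]
      exact Gsum g i j
  · intro i j h
    exact if_neg (fun hh => Int.not_odd_iff_even.mpr hh.2 h)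

lemma kerBW_zero_of_col (c : ℤ) (v : ℤ → ℤ → ZMod 2) (hv : v ∈ kerBW c c)
    (h0 : ∀ i, v i 0 = 0) : v = 0 := by
  obtain ⟨hharm, -⟩ := Submodule.mem_inf.mp hv
  obtain ⟨hs, hh⟩ := (hharm : IsHarmonic c c v)
  have key : ∀ n : ℕ, ∀ i : ℤ, v i (n : ℤ) = 0 := by
    intro n
    induction n using Nat.strong_induction_on with
    | _ n IH =>
      match n with
      | 0 => exact h0
      | Nat.succ m =>
        intro i
        by_cases hin : InGrid c c i ((m+1 : ℕ) : ℤ)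
        · have hgrid : InGrid c c i ((m:ℕ) : ℤ) := by
            unfold InGrid at hin ⊢
            push_cast at hin ⊢
            omega
          have h1 := hh i ((m:ℕ):ℤ) hgrid
          have z1 : v (i-1) ((m:ℕ):ℤ) = 0 := IH m (by omega) _
          have z2 : v (i+1) ((m:ℕ):ℤ) = 0 := IH m (by omega) _
          have z3 : v i (((m:ℕ):ℤ) - 1) = 0 := by
            match m with
            | 0 => exact hs i (((0:ℕ):ℤ)-1) (by unfold InGrid; omega)
            | Nat.succ l =>
              have e : (((l+1:ℕ):ℤ)) - 1 = ((l:ℕ):ℤ) := by push_cast; ring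
              rw [e]
              exact IH l (by omega) i
          rw [z1, z2, z3] at h1
          have : v i (((m:ℕ):ℤ) + 1) = 0 := by
            rw [← h1]; ring
          rw [show (((m+1:ℕ)):ℤ) = ((m:ℕ):ℤ) + 1 by push_cast; ring]
          exact this
        · exact hs i _ hin
  funext i j
  show v i j = 0
  by_cases hj : 0 ≤ j
  · have := key j.toNat i
    rwa [Int.toNat_of_nonneg hj] at this
  · exact hs i j (by unfold InGrid; omega)

lemma col0 (c : ℕ) (v : ℤ → ℤ → ZMod 2) (hv : v ∈ kerBW (c:ℤ) (c:ℤ))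
    (h0 : ∀ t : Fin ((c+1)/2), v (2*(t:ℤ)) 0 = 0) : ∀ i : ℤ, v i 0 = 0 := by
  obtain ⟨⟨hs, -⟩, hw⟩ := Submodule.mem_inf.mp hv
  intro i
  by_cases hin : InGrid (c:ℤ) (c:ℤ) i 0
  · by_cases hpar : Even i
    · obtain ⟨t, ht⟩ := hpar
      obtain ⟨h1, h2, -, -⟩ := hin
      have htnat : t.toNat < (c+1)/2 := by omega
      have := h0 ⟨t.toNat, htnat⟩
      simp only [Fin.val_mk] at this
      rwa [show 2*((t.toNat : ℤ)) = i by omega] at this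
    · exact hw i 0 (by show Odd (i + 0); rw [add_zero]; exact Int.not_even_iff_odd.mp hpar)
  · exact hs i 0 hin

def bsum (c : ℕ) (a : Fin ((c+1)/2) → ZMod 2) (t : ℕ) : ZMod 2 :=
  ∑ s ∈ Finset.range (t+1), if h : s < (c+1)/2 then a ⟨s, h⟩ else 0

def gdef (c : ℕ) (a : Fin ((c+1)/2) → ZMod 2) (x : ℤ) : ZMod 2 :=
  if (x+1) % ((c:ℤ)+1) = 0 then 0
  else bsum c a (min ((x+1) % ((c:ℤ)+1) - 1) ((c:ℤ) - (x+1) % ((c:ℤ)+1))).toNat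

lemma gdef_per (c : ℕ) (a : Fin ((c+1)/2) → ZMod 2) (x : ℤ) :
    gdef c a (x + ((c:ℤ)+1)) = gdef c a x := by
  have e : x + ((c:ℤ)+1) + 1 = (x+1) + ((c:ℤ)+1) * 1 := by ring
  simp only [gdef, e, Int.add_mul_emod_self_left]

lemma gdef_sym (c : ℕ) (a : Fin ((c+1)/2) → ZMod 2) (x : ℤ) :
    gdef c a (-2 - x) = gdef c a x := by
  have hpos : (0:ℤ) < (c:ℤ)+1 := by positivity
  have hr0 : 0 ≤ (x+1) % ((c:ℤ)+1) := Int.emod_nonneg _ hpos.ne'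
  have hrlt : (x+1) % ((c:ℤ)+1) < (c:ℤ)+1 := Int.emod_lt_of_pos _ hpos
  have hdiv := Int.mul_ediv_add_emod (x+1) ((c:ℤ)+1)
  have e1 : -2 - x + 1 = (((c:ℤ)+1) - (x+1) % ((c:ℤ)+1))
      + (((c:ℤ)+1)) * (-((x+1) / ((c:ℤ)+1))-1) := by linear_combination hdiv
  have e2 : (-2 - x + 1) % ((c:ℤ)+1) = (((c:ℤ)+1) - (x+1) % ((c:ℤ)+1)) % ((c:ℤ)+1) := by
    rw [e1, Int.add_mul_emod_self_left]
  by_cases h0 : (x+1) % ((c:ℤ)+1) = 0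
  · have hz : (-2 - x + 1) % ((c:ℤ)+1) = 0 := by
      rw [e2, h0, sub_zero, Int.emod_self]
    simp only [gdef, hz, h0, if_pos rfl]
  · have e3 : (-2 - x + 1) % ((c:ℤ)+1) = ((c:ℤ)+1) - (x+1) % ((c:ℤ)+1) := by
      rw [e2]; exact Int.emod_eq_of_lt (by omega) (by omega)
    have h0' : (-2 - x + 1) % ((c:ℤ)+1) ≠ 0 := by rw [e3]; omega
    simp only [gdef, e3]
    rw [if_neg (show ¬((c:ℤ)+1 - (x+1)%((c:ℤ)+1) = 0) by omega), if_neg h0]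
    congr 2
    omega

lemma gdef_neg_one (c : ℕ) (a : Fin ((c+1)/2) → ZMod 2) : gdef c a (-1) = 0 := by
  simp [gdef]

lemma gdef_eval (c : ℕ) (a : Fin ((c+1)/2) → ZMod 2) (t : ℤ) (h0 : 0 ≤ t)
    (h1 : 2*t ≤ (c:ℤ)-1) : gdef c a t = bsum c a t.toNat := by
  have e : (t+1) % ((c:ℤ)+1) = t+1 := Int.emod_eq_of_lt (by omega) (by omega)
  have hne : (t+1) % ((c:ℤ)+1) ≠ 0 := by rw [e]; omega
  simp only [gdef, e]
  rw [if_neg (show ¬(t+1 = 0) by omega)]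
  congr 1
  omega

lemma surj_aux (c : ℕ) (hc : 1 ≤ c) (a : Fin ((c+1)/2) → ZMod 2) :
    ∃ w ∈ kerBW (c:ℤ) (c:ℤ), ∀ t : Fin ((c+1)/2), w (2*(t:ℤ)) 0 = a t := by
  refine ⟨extFun (c:ℤ) (gdef c a),
    ext_mem (c:ℤ) (gdef c a) (gdef_sym c a) (gdef_per c a), ?_⟩
  intro t
  have htk : t.1 < (c+1)/2 := t.2
  have h2t : 2*((t.1:ℕ):ℤ) ≤ (c:ℤ) - 1 := by omega
  have hgrid : InGrid (c:ℤ) (c:ℤ) (2*(t:ℤ)) 0 := by unfold InGrid; omega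
  have heven : Even (2*(t:ℤ) + 0) := ⟨(t:ℤ), by ring⟩
  show (if InGrid (c:ℤ) (c:ℤ) (2*(t:ℤ)) 0 ∧ Even (2*(t:ℤ) + 0) then
      Gfun (gdef c a) (2*(t:ℤ)) 0 else 0) = a t
  rw [if_pos ⟨hgrid, heven⟩, Gfun]
  have e1 : (2*(t:ℤ) + 0)/2 = (t:ℤ) := by omega
  have e2 : (2*(t:ℤ) - 0 - 2)/2 = (t:ℤ) - 1 := by omega
  rw [e1, e2]
  rcases Nat.eq_zero_or_pos t.1 with h|h
  · have ht0 : (t:ℤ) = 0 := by omega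
    rw [ht0, show (0:ℤ)-1 = -1 by ring, gdef_neg_one,
       gdef_eval c a 0 le_rfl (by omega)]
    have : bsum c a ((0:ℤ)).toNat = a t := by
      show bsum c a 0 = a t
      rw [bsum, Finset.sum_range_one, dif_pos (by omega : 0 < (c+1)/2)]
      congr 1
      exact (Fin.ext (by simp only [Fin.val_mk]; omega)).symm
    rw [this, add_zero]
  · obtain ⟨s, hs⟩ : ∃ s, t.1 = s+1 := ⟨t.1 - 1, by omega⟩
    rw [gdef_eval c a (t:ℤ) (by omega) h2t,
        gdef_eval c a ((t:ℤ)-1) (by omega) (by omega)]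
    have e4 : ((t:ℤ)).toNat = s+1 := by omega
    have e5 : ((t:ℤ)-1).toNat = s := by omega
    rw [e4, e5]
    have hrec : bsum c a (s+1) = bsum c a s
        + (if h : s+1 < (c+1)/2 then a ⟨s+1, h⟩ else 0) := by
      rw [bsum, bsum, Finset.sum_range_succ]
    rw [hrec, dif_pos (by omega : s+1 < (c+1)/2)]
    have : a ⟨s+1, by omega⟩ = a t := by congr 1; exact (Fin.ext (by simp only [Fin.val_mk]; omega)).symm
    rw [this]
    have hz := z2_add_self (bsum c a s)
    linear_combination hz

end Aux

/-- Proposition 4, black part: 2·dim ker BW of the c×c grid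
equals c + (c mod 2). -/
theorem kerBW_square_dim (c : ℕ) (hc : 1 ≤ c) :
    2 * Module.finrank (ZMod 2) (kerBW (c : ℤ) (c : ℤ)) = c + c % 2 := by
  classical
  let F : kerBW (c:ℤ) (c:ℤ) →ₗ[ZMod 2] (Fin ((c+1)/2) → ZMod 2) :=
    { toFun := fun v => fun t => v.1 (2*(t:ℤ)) 0
      map_add' := fun u v => rfl
      map_smul' := fun r v => rfl }
  have hinj : Function.Injective F := by
    rw [injective_iff_map_eq_zero]
    intro v hv
    have h0 : ∀ t : Fin ((c+1)/2), v.1 (2*(t:ℤ)) 0 = 0 := fun t => congrFun hv t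
    exact Subtype.ext
      (Aux.kerBW_zero_of_col (c:ℤ) v.1 v.2 (Aux.col0 c v.1 v.2 h0))
  have hsurj : Function.Surjective F := by
    intro a
    obtain ⟨w, hw, hwa⟩ := Aux.surj_aux c hc a
    exact ⟨⟨w, hw⟩, funext hwa⟩
  have hrk := LinearEquiv.finrank_eq (LinearEquiv.ofBijective F ⟨hinj, hsurj⟩)
  rw [hrk, Module.finrank_pi, Fintype.card_fin]
  omega
end

section
/- (First-column determination, injectivity.) Let m, n ≥ 2 be integers. If u and v are harmonic functions on the m×n rectangular grid that agree along the first column, i.e. u(0, j) = v(0, j) for all 0 ≤ j ≤ n−1, then u = v. Equivalently, the 𝔽₂-linear map sending a harmonic function to its restriction to the column x = 0 is injective. -/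
/-- a harmonic function is determined by its values on the
first column x = 0. -/
theorem first_column_determines (m n : ℤ) (hm : 2 ≤ m) (hn : 2 ≤ n)
    (u v : ℤ → ℤ → ZMod 2) (hu : IsHarmonic m n u) (hv : IsHarmonic m n v)
    (h : ∀ j : ℤ, 0 ≤ j → j ≤ n - 1 → u 0 j = v 0 j) : u = v := by
  set w : ℤ → ℤ → ZMod 2 := fun i j => u i j - v i j with hw
  obtain ⟨hu0, hu1⟩ := hu
  obtain ⟨hv0, hv1⟩ := hv
  have hw0 : ∀ i j, ¬ InGrid m n i j → w i j = 0 := by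
    intro i j hij
    simp [hw, hu0 i j hij, hv0 i j hij]
  have key : ∀ k : ℕ, ∀ j : ℤ, w (k : ℤ) j = 0 := by
    intro k
    induction k using Nat.strong_induction_on with
    | _ k ih =>
      intro j
      match k with
      | 0 =>
        by_cases hg : InGrid m n 0 j
        · obtain ⟨_, _, hj0, hj1⟩ := hg
          simp [hw, h j hj0 hj1]
        · exact hw0 0 j (by exact_mod_cast hg)
      | Nat.succ k =>
        by_cases hg : InGrid m n ((k : ℤ) + 1) j
        · have hgk : InGrid m n (k : ℤ) j := by
            obtain ⟨h1, h2, h3, h4⟩ := hg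
            exact ⟨by positivity, by omega, h3, h4⟩
          have h1 := hu1 (k : ℤ) j hgk
          have h2 := hv1 (k : ℤ) j hgk
          have e1 : w ((k : ℤ) - 1) j = 0 := by
            match k with
            | 0 => exact hw0 _ _ (by rintro ⟨a, b, c, d⟩; omega)
            | Nat.succ k' =>
              have := ih k' (by omega) j
              have hc : ((Nat.succ k' : ℕ) : ℤ) - 1 = (k' : ℤ) := by push_cast; ring
              rw [hc]; exact this
          have e3 : w (k : ℤ) (j - 1) = 0 := ih k (by omega) (j - 1)
          have e4 : w (k : ℤ) (j + 1) = 0 := ih k (by omega) (j + 1)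
          have : w ((k : ℤ) - 1) j + w ((k : ℤ) + 1) j + w (k : ℤ) (j - 1)
              + w (k : ℤ) (j + 1) = 0 := by
            simp only [hw]
            linear_combination h1 - h2
          have goal : w ((k : ℤ) + 1) j = 0 := by
            rw [e1, e3, e4] at this; linear_combination this
          exact_mod_cast goal
        · have : w ((k : ℤ) + 1) j = 0 := hw0 _ _ hg
          exact_mod_cast this
  funext i j
  have hwz : w i j = 0 := by
    rcases lt_or_ge i 0 with hi | hi
    · exact hw0 i j (by rintro ⟨a, b, c, d⟩; omega)
    · lift i to ℕ using hi
      exact key i j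
  have : u i j - v i j = 0 := hwz
  exact sub_eq_zero.mp this
end

section
/- (First-column determination, surjectivity for squares.) Let n ≥ 1 be an integer. For every choice of values a : {0,…,n−1} → ZMod 2 there exists a (necessarily unique) harmonic function v on the n×n square grid with v(0, j) = a(j) for all 0 ≤ j ≤ n−1. In particular, the 𝔽₂-dimension of the space of harmonic functions on the n×n square grid equals n. -/
namespace FCS


def bres (n : ℕ) (a : ℤ → ZMod 2) (r : ℤ) : ZMod 2 :=
  if r ≤ (n : ℤ) - 1 then a r
  else if r ≤ (n : ℤ) then 0
  else if r ≤ 2 * n then a (2 * n - r)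
  else 0

def bfun (n : ℕ) (a : ℤ → ZMod 2) (t : ℤ) : ZMod 2 :=
  bres n a (t % (2 * n + 2))

variable {n : ℕ} {a : ℤ → ZMod 2}

lemma Npos : (0:ℤ) < 2 * n + 2 := by positivity

lemma bfun_period (t m : ℤ) : bfun n a (t + (2 * n + 2) * m) = bfun n a t := by
  unfold bfun
  congr 1
  apply Int.add_mul_emod_self_left

lemma bfun_val (j : ℤ) (h0 : 0 ≤ j) (h1 : j ≤ (n:ℤ) - 1) : bfun n a j = a j := by
  unfold bfun bres
  rw [Int.emod_eq_of_lt h0 (by omega)]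
  rw [if_pos h1]

lemma bfun_reflect (t : ℤ) : bfun n a (-2 - t) = bfun n a t := by
  unfold bfun
  set N : ℤ := 2 * n + 2 with hN
  have hr0 : 0 ≤ t % N := Int.emod_nonneg t (by omega)
  have hr1 : t % N < N := Int.emod_lt_of_pos t (by omega)
  have key : (-2 - t) % N = (-2 - t % N) % N := by
    conv_lhs => rw [Int.sub_emod, Int.emod_emod_of_dvd t dvd_rfl |>.symm, ← Int.sub_emod]
  rw [key]
  set r := t % N with hr
  by_cases hcase : r = N - 1
  · have : (-2 - r) % N = N - 1 := by
      rw [hcase]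
      have : (-2 - (N - 1)) = (N - 1) + N * (-2) := by ring
      rw [this, Int.add_mul_emod_self_left, Int.emod_eq_of_lt (by omega) (by omega)]
    rw [this, hcase]
  · have : (-2 - r) % N = 2 * n - r := by
      have e : (-2 - r) = (2 * n - r) + N * (-1) := by rw [hN]; ring
      rw [e, Int.add_mul_emod_self_left, Int.emod_eq_of_lt (by omega) (by omega)]
    rw [this]
    unfold bres
    split_ifs <;> first | omega | (congr 1 <;> omega)

lemma bfun_zero_of (t : ℤ) (h : t % ((n:ℤ) + 1) = n) : bfun n a t = 0 := by
  unfold bfun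
  set N : ℤ := 2 * n + 2 with hN
  have hr0 : 0 ≤ t % N := Int.emod_nonneg t (by omega)
  have hr1 : t % N < N := Int.emod_lt_of_pos t (by omega)
  set r := t % N with hr
  have hd : ((n:ℤ) + 1) ∣ N := ⟨2, by ring⟩
  have h2 : r % ((n:ℤ)+1) = n := by rw [hr, Int.emod_emod_of_dvd t hd, h]
  have hq := Int.mul_ediv_add_emod r ((n:ℤ)+1)
  rw [h2] at hq
  set q := r / ((n:ℤ)+1) with hqdef
  have hq0 : 0 ≤ q := Int.ediv_nonneg hr0 (by omega)
  have hq2 : q < 2 := by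
    rw [hqdef, Int.ediv_lt_iff_lt_mul (by omega)]
    omega
  have : q = 0 ∨ q = 1 := by omega
  have hrval : r = (n:ℤ) ∨ r = 2 * n + 1 := by
    rcases this with h' | h' <;> rw [h'] at hq <;> [left; right] <;> omega
  unfold bres
  rcases hrval with h' | h' <;> rw [h'] <;> split_ifs <;> first | rfl | omega

lemma bfun_neg_one : bfun n a (-1) = 0 :=
  bfun_zero_of _ (by
    have : (-1 : ℤ) = (n:ℤ) + ((n:ℤ)+1) * (-1) := by ring
    rw [this, Int.add_mul_emod_self_left, Int.emod_eq_of_lt (by omega) (by omega)])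

lemma bfun_n : bfun n a (n:ℤ) = 0 :=
  bfun_zero_of _ (Int.emod_eq_of_lt (by omega) (by omega))

def Wf (n : ℕ) (a : ℤ → ZMod 2) (i : ℕ) (j : ℤ) : ZMod 2 :=
  ∑ k ∈ Finset.range (i + 1), bfun n a (j + i - 2 * k)

lemma addself (x : ZMod 2) : x + x = 0 := by
  revert x; decide

lemma Wf_zero (j : ℤ) : Wf n a 0 j = bfun n a j := by
  simp [Wf]

lemma Wf_one (j : ℤ) : Wf n a 1 j = bfun n a (j + 1) + bfun n a (j - 1) := by
  rw [Wf, Finset.sum_range_succ, Finset.sum_range_one]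
  congr 1 <;> (congr 1; push_cast; ring)

lemma Wf_step_right (i : ℕ) (j : ℤ) :
    Wf n a (i + 2) j = Wf n a (i + 1) (j + 1) + bfun n a (j - i - 2) := by
  rw [Wf, Finset.sum_range_succ]
  congr 1
  · apply Finset.sum_congr rfl
    intro k hk
    congr 1
    push_cast; ring
  · congr 1; push_cast; ring

lemma Wf_step_left (i : ℕ) (j : ℤ) :
    Wf n a (i + 1) (j - 1) = Wf n a i j + bfun n a (j - i - 2) := by
  rw [Wf, Finset.sum_range_succ]
  congr 1
  · apply Finset.sum_congr rfl
    intro k hk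
    congr 1
    push_cast; ring
  · congr 1; push_cast; ring

lemma Wf_harm0 (j : ℤ) : Wf n a 0 (j - 1) + Wf n a 0 (j + 1) = Wf n a 1 j := by
  rw [Wf_zero, Wf_zero, Wf_one, add_comm]

lemma Wf_harmS (i : ℕ) (j : ℤ) :
    Wf n a i j + Wf n a (i + 2) j + Wf n a (i + 1) (j - 1) + Wf n a (i + 1) (j + 1) = 0 := by
  rw [Wf_step_right, Wf_step_left]
  have h1 := addself (Wf n a i j)
  have h2 := addself (bfun n a (j - i - 2))
  have h3 := addself (Wf n a (i+1) (j+1))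
  linear_combination h1 + h2 + h3

lemma Wf_bdry (i : ℕ) (c : ℤ) (hrefl : ∀ t : ℤ, bfun n a (c - t) = bfun n a (c + t))
    (h0 : bfun n a c = 0) : Wf n a i c = 0 := by
  rw [Wf]
  apply Finset.sum_involution (fun k _ => i - k)
  · intro k hk
    have hki : k ≤ i := by simpa [Finset.mem_range] using Nat.lt_succ_iff.mp (Finset.mem_range.mp hk)
    have harg : (c + (i:ℤ) - 2 * ((i - k : ℕ) : ℤ)) = c - ((i:ℤ) - 2 * k) := by
      rw [Nat.cast_sub hki]; ring
    have harg2 : (c + (i:ℤ) - 2 * (k:ℤ)) = c + ((i:ℤ) - 2 * k) := by ring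
    rw [harg, harg2, hrefl]
    exact addself _
  · intro k hk hne heq
    have hki : k ≤ i := Nat.lt_succ_iff.mp (Finset.mem_range.mp hk)
    have : i = 2 * k := by omega
    apply hne
    have : (c + (i:ℤ) - 2 * (k:ℤ)) = c := by rw [this]; push_cast; ring
    rw [this, h0]
  · intro k hk
    have hki : k ≤ i := Nat.lt_succ_iff.mp (Finset.mem_range.mp hk)
    exact Finset.mem_range.mpr (by omega)
  · intro k hk
    have hki : k ≤ i := Nat.lt_succ_iff.mp (Finset.mem_range.mp hk)
    omega

lemma Wf_neg_one (i : ℕ) : Wf n a i (-1) = 0 := by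
  apply Wf_bdry i (-1) _ bfun_neg_one
  intro t
  have : (-1 : ℤ) - t = -2 - (-1 + t) := by ring
  rw [this, bfun_reflect]

lemma Wf_n (i : ℕ) : Wf n a i (n:ℤ) = 0 := by
  apply Wf_bdry i (n:ℤ) _ bfun_n
  intro t
  have : ((n:ℤ) - t) = (-2 - ((n:ℤ) + t)) + (2 * n + 2) * 1 := by ring
  rw [this, bfun_period, bfun_reflect]

lemma Wf_top (j : ℤ) : Wf n a n j = 0 := by
  rw [Wf]
  set m : ℤ := (n:ℤ) + 1 with hm
  have hmpos : (0:ℤ) < m := by omega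
  have gdef : ∀ k : ℕ, True := fun _ => trivial
  apply Finset.sum_involution (f := fun k : ℕ => bfun n a (j + (n:ℤ) - 2 * (k:ℤ))) (fun k _ => ((j - k) % m).toNat)
  · -- f k + f (g k) = 0
    intro k hk
    set r : ℤ := (j - k) % m with hr
    have hr0 : 0 ≤ r := Int.emod_nonneg _ (by omega)
    have hrm : r < m := Int.emod_lt_of_pos _ hmpos
    have hcast : ((r.toNat : ℤ)) = r := Int.toNat_of_nonneg hr0
    have hq := Int.mul_ediv_add_emod (j - k) m
    set q : ℤ := (j - k) / m with hqd
    -- j - k = m * q + r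
    have harg : (j + (n:ℤ) - 2 * (r.toNat : ℤ))
        = ((-2 - (j + (n:ℤ) - 2 * k)) + (2 * n + 2) * 1) + (2 * n + 2) * q := by
      rw [hcast]
      have : r = (j - k) - m * q := by omega
      rw [this, hm]; ring
    rw [harg, bfun_period, bfun_period, bfun_reflect]
    exact addself _
  · -- fixed points
    intro k hk hne
    intro heq
    apply hne
    have hkn : k ≤ n := Nat.lt_succ_iff.mp (Finset.mem_range.mp hk)
    -- (j - k) % m = k
    have hr0 : 0 ≤ (j - k) % m := Int.emod_nonneg _ (by omega)
    have hrk : (j - k) % m = (k:ℤ) := by omega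
    apply bfun_zero_of
    -- (j + n - 2k) % (n+1) = n
    have hq := Int.mul_ediv_add_emod (j - k) m
    rw [hrk] at hq
    set q : ℤ := (j - k) / m with hqd
    have : (j + (n:ℤ) - 2 * k) = (n:ℤ) + m * q := by omega
    rw [this, hm, Int.add_mul_emod_self_left, Int.emod_eq_of_lt (by omega) (by omega)]
  · -- mem
    intro k hk
    have hr0 : 0 ≤ (j - k) % m := Int.emod_nonneg _ (by omega)
    have hrm : (j - k) % m < m := Int.emod_lt_of_pos _ hmpos
    exact Finset.mem_range.mpr (by omega)
  · -- involution
    intro k hk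
    have hkn : k ≤ n := Nat.lt_succ_iff.mp (Finset.mem_range.mp hk)
    have hr0 : 0 ≤ (j - k) % m := Int.emod_nonneg _ (by omega)
    have hrm : (j - k) % m < m := Int.emod_lt_of_pos _ hmpos
    have hcast : ((((j - k) % m).toNat : ℤ)) = (j - k) % m := Int.toNat_of_nonneg hr0
    have key : (j - (((j - k) % m).toNat : ℤ)) % m = k := by
      rw [hcast]
      have hq := Int.mul_ediv_add_emod (j - k) m
      set q : ℤ := (j - k) / m with hqd
      have : j - (j - k) % m = (k:ℤ) + m * q := by omega
      rw [this, Int.add_mul_emod_self_left, Int.emod_eq_of_lt (by omega) (by omega)]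
    omega

def ext (n : ℕ) (a : ℤ → ZMod 2) : ℤ → ℤ → ZMod 2 :=
  fun i j => if InGrid n n i j then Wf n a i.toNat j else 0

lemma ext_harmonic (hn : 1 ≤ n) : IsHarmonic (n:ℤ) (n:ℤ) (ext n a) := by
  constructor
  · intro i j h
    exact if_neg h
  · intro i j hg
    obtain ⟨hi0, hi1, hj0, hj1⟩ := hg
    set i₀ : ℕ := i.toNat with hi₀
    have hi : (i₀ : ℤ) = i := Int.toNat_of_nonneg hi0
    have e1 : ext n a i (j - 1) = Wf n a i₀ (j - 1) := by
      by_cases h : 0 ≤ j - 1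
      · exact if_pos ⟨hi0, hi1, h, by omega⟩
      · rw [ext, if_neg (fun hh => h hh.2.2.1)]
        have : j - 1 = -1 := by omega
        rw [this, Wf_neg_one]
    have e2 : ext n a i (j + 1) = Wf n a i₀ (j + 1) := by
      by_cases h : j + 1 ≤ (n:ℤ) - 1
      · exact if_pos ⟨hi0, hi1, by omega, h⟩
      · rw [ext, if_neg (fun hh => h hh.2.2.2)]
        have : j + 1 = (n:ℤ) := by omega
        rw [this, Wf_n]
    have e3 : ext n a (i + 1) j = Wf n a (i₀ + 1) j := by
      by_cases h : i + 1 ≤ (n:ℤ) - 1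
      · have h' : ext n a (i+1) j = Wf n a (i+1).toNat j := if_pos ⟨by omega, h, hj0, hj1⟩
        rw [h']
        congr 1
        omega
      · rw [ext, if_neg (fun hh => h hh.2.1)]
        have : i₀ + 1 = n := by omega
        rw [this, Wf_top]
    rw [e1, e2, e3]
    by_cases h : i = 0
    · have e0 : ext n a (i - 1) j = 0 := by
        rw [ext, if_neg (fun hh => by have := hh.1; omega)]
      rw [e0]
      have hz : i₀ = 0 := by omega
      rw [hz]
      have hh := Wf_harm0 (n := n) (a := a) j
      linear_combination hh + addself (Wf n a 1 j)
    · obtain ⟨m, hm⟩ : ∃ m, i₀ = m + 1 := ⟨i₀ - 1, by omega⟩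
      have e0 : ext n a (i - 1) j = Wf n a m j := by
        have h' : ext n a (i-1) j = Wf n a (i-1).toNat j := if_pos ⟨by omega, by omega, hj0, hj1⟩
        rw [h']
        congr 1
        omega
      rw [e0, hm]
      have hh := Wf_harmS (n := n) (a := a) m j
      linear_combination hh

lemma ext_col (hn : 1 ≤ n) (j : ℤ) (h0 : 0 ≤ j) (h1 : j ≤ (n:ℤ) - 1) :
    ext n a 0 j = a j := by
  rw [ext, if_pos ⟨le_refl _, by omega, h0, h1⟩]
  show Wf n a (0:ℤ).toNat j = a j
  rw [Int.toNat_zero, Wf_zero, bfun_val j h0 h1]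

lemma harm_unique (hn : 1 ≤ n) (v : ℤ → ℤ → ZMod 2) (hv : IsHarmonic (n:ℤ) (n:ℤ) v)
    (h0 : ∀ j : ℤ, v 0 j = 0) : v = 0 := by
  have key : ∀ i : ℕ, (∀ j : ℤ, v (i:ℤ) j = 0) ∧ (∀ j : ℤ, v ((i:ℤ) + 1) j = 0) := by
    intro i
    induction i with
    | zero =>
      refine ⟨fun j => h0 j, fun j => ?_⟩
      by_cases hg : InGrid (n:ℤ) (n:ℤ) 1 j
      · have hg0 : InGrid (n:ℤ) (n:ℤ) 0 j := by
          obtain ⟨a1, a2, a3, a4⟩ := hg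
          exact ⟨le_refl _, by omega, a3, a4⟩
        have heq := hv.2 0 j hg0
        have hout : v (0 - 1) j = 0 := hv.1 _ _ (fun hh => by have := hh.1; omega)
        rw [hout, h0, h0] at heq
        simpa using heq
      · simpa using hv.1 _ _ hg
    | succ i ih =>
      refine ⟨fun j => by simpa using ih.2 j, fun j => ?_⟩
      by_cases hg : InGrid (n:ℤ) (n:ℤ) ((i:ℤ) + 1 + 1) j
      · have hg1 : InGrid (n:ℤ) (n:ℤ) ((i:ℤ) + 1) j := by
          obtain ⟨a1, a2, a3, a4⟩ := hg
          exact ⟨by omega, by omega, a3, a4⟩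
        have heq := hv.2 _ j hg1
        have c1 : v ((i:ℤ) + 1 - 1) j = 0 := by
          rw [show (i:ℤ) + 1 - 1 = (i:ℤ) by ring]
          exact ih.1 j
        have c2 : v ((i:ℤ) + 1) (j - 1) = 0 := ih.2 _
        have c3 : v ((i:ℤ) + 1) (j + 1) = 0 := ih.2 _
        rw [c1, c2, c3] at heq
        simpa using heq
      · have := hv.1 _ _ hg
        simpa using this
  funext i j
  by_cases hi : 0 ≤ i
  · have := (key i.toNat).1 j
    rw [Int.toNat_of_nonneg hi] at this
    simpa using this
  · have : ¬ InGrid (n:ℤ) (n:ℤ) i j := fun hh => by have := hh.1; omega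
    simpa using hv.1 _ _ this

end FCS

/-- on the n×n square grid, any choice of values along the first
column extends to a harmonic function; in particular the space of harmonic
functions has 𝔽₂-dimension n. -/
theorem first_column_surjective_square (n : ℕ) (hn : 1 ≤ n) :
    (∀ a : ℤ → ZMod 2, ∃ v : ℤ → ℤ → ZMod 2,
      IsHarmonic (n : ℤ) (n : ℤ) v ∧
        ∀ j : ℤ, 0 ≤ j → j ≤ (n : ℤ) - 1 → v 0 j = a j) ∧
    Module.finrank (ZMod 2) (harm (n : ℤ) (n : ℤ)) = n := by
  constructor
  · intro a
    exact ⟨FCS.ext n a, FCS.ext_harmonic hn, fun j h0 h1 => FCS.ext_col hn j h0 h1⟩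
  · let φ : harm (n:ℤ) (n:ℤ) →ₗ[ZMod 2] (Fin n → ZMod 2) :=
      { toFun := fun v j => v.1 0 (j : ℤ)
        map_add' := fun v w => rfl
        map_smul' := fun c v => rfl }
    have hinj : Function.Injective φ := by
      apply (injective_iff_map_eq_zero φ).mpr
      intro v hv0
      have h0 : ∀ j : ℤ, v.1 0 j = 0 := by
        intro j
        by_cases hj : 0 ≤ j ∧ j ≤ (n:ℤ) - 1
        · have h1 := congrFun hv0 ⟨j.toNat, by omega⟩
          have h2 : ((⟨j.toNat, by omega⟩ : Fin n) : ℤ) = j := by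
            simp [Int.toNat_of_nonneg hj.1]
          simpa [φ, h2] using h1
        · exact v.2.1 0 j (fun hh => hj ⟨hh.2.2.1, hh.2.2.2⟩)
      exact Subtype.ext (FCS.harm_unique hn v.1 v.2 h0)
    have hsurj : Function.Surjective φ := by
      intro w
      set a : ℤ → ZMod 2 :=
        fun t => if h : 0 ≤ t ∧ t < (n:ℤ) then w ⟨t.toNat, by omega⟩ else 0 with ha
      refine ⟨⟨FCS.ext n a, FCS.ext_harmonic hn⟩, ?_⟩
      funext j
      show FCS.ext n a 0 (j:ℤ) = w j
      rw [FCS.ext_col hn _ (by positivity) (by omega)]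
      have hj : (0:ℤ) ≤ ((j:ℕ):ℤ) ∧ ((j:ℕ):ℤ) < (n:ℤ) := ⟨by positivity, by exact_mod_cast j.2⟩
      show (if h : (0:ℤ) ≤ ((j:ℕ):ℤ) ∧ ((j:ℕ):ℤ) < (n:ℤ) then w ⟨((j:ℕ):ℤ).toNat, by omega⟩ else 0) = w j
      rw [dif_pos hj]
      exact congrArg w (Fin.ext (by simp))
    have := LinearEquiv.finrank_eq (LinearEquiv.ofBijective φ ⟨hinj, hsurj⟩)
    rw [this, Module.finrank_pi, Fintype.card_fin]
end

section
/- (Kernel decomposition by color.) Let m, n ≥ 2 and let v be a harmonic function on the m×n rectangular grid. Then the function v_b defined by v_b(i,j) = v(i,j) if i+j is even and v_b(i,j) = 0 if i+j is odd is again harmonic, and likewise the function v_w = v − v_b supported on points with i+j odd is harmonic. Consequently the space of harmonic functions is the internal direct sum of the polarized kernels ker BW and ker WB. -/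
lemma blackHarm (m n : ℤ) (u : ℤ → ℤ → ZMod 2) (hu : IsHarmonic m n u) :
    IsHarmonic m n (fun i j => if Even (i + j) then u i j else 0) := by
  obtain ⟨hu0, hu1⟩ := hu
  constructor
  · intro i j h
    simp [hu0 i j h]
  · intro i j h
    have e1 : Even (i - 1 + j) ↔ ¬ Even (i + j) := by
      simp only [Int.even_iff, Int.not_even_iff]; omega
    have e2 : Even (i + 1 + j) ↔ ¬ Even (i + j) := by
      simp only [Int.even_iff, Int.not_even_iff]; omega
    have e3 : Even (i + (j - 1)) ↔ ¬ Even (i + j) := by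
      simp only [Int.even_iff, Int.not_even_iff]; omega
    have e4 : Even (i + (j + 1)) ↔ ¬ Even (i + j) := by
      simp only [Int.even_iff, Int.not_even_iff]; omega
    by_cases hp : Even (i + j)
    · simp only [e1, e2, e3, e4, hp, not_true, if_neg, if_false]
      simp
    · simp only [e1, e2, e3, e4, hp, not_false_iff, if_pos]
      exact hu1 i j h

lemma memBW (m n : ℤ) (u : ℤ → ℤ → ZMod 2) (hu : IsHarmonic m n u) :
    (fun i j => if Even (i + j) then u i j else 0) ∈ kerBW m n := by
  refine ⟨blackHarm m n u hu, fun i j h => ?_⟩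
  simp [Int.not_even_iff_odd.2 h]

lemma memWB (m n : ℤ) (u : ℤ → ℤ → ZMod 2) (hu : IsHarmonic m n u) :
    (fun i j => u i j - if Even (i + j) then u i j else 0) ∈ kerWB m n := by
  have hb := blackHarm m n u hu
  constructor
  · show (u - fun i j => if Even (i + j) then u i j else 0) ∈ harm m n
    exact sub_mem (show u ∈ harm m n from hu) (show _ ∈ harm m n from hb)
  · intro i j h
    simp [h]

/-- the black and white parts of a harmonic function are harmonic,
and the space of harmonic functions is the internal direct sum of ker BW and
ker WB. -/
theorem kernel_color_decomposition (m n : ℤ) (hm : 2 ≤ m) (hn : 2 ≤ n)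
    (v : ℤ → ℤ → ZMod 2) (hv : IsHarmonic m n v) :
    IsHarmonic m n (fun i j => if Even (i + j) then v i j else 0) ∧
    IsHarmonic m n (fun i j => v i j - if Even (i + j) then v i j else 0) ∧
    kerBW m n ⊔ kerWB m n = harm m n ∧
    kerBW m n ⊓ kerWB m n = ⊥ := by
  refine ⟨blackHarm m n v hv, (memWB m n v hv).1, ?_, ?_⟩
  · apply le_antisymm (sup_le inf_le_left inf_le_left)
    intro u hu
    have : u = (fun i j => if Even (i + j) then u i j else 0) +
        (fun i j => u i j - if Even (i + j) then u i j else 0) := by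
      funext i j; simp
    rw [this]
    exact Submodule.add_mem_sup (memBW m n u hu) (memWB m n u hu)
  · rw [eq_bot_iff]
    rintro u ⟨⟨-, h1⟩, ⟨-, h2⟩⟩
    have : u = 0 := by
      funext i j
      rcases Int.even_or_odd (i + j) with h | h
      · exact h2 i j h
      · exact h1 i j h
    simp [this]
end

section
/- (Zero column at x = n, from the proof of Theorem 3.) Let m > n ≥ 2 be integers and let v be a harmonic function on the m×n rectangular grid. Then v vanishes along the column x = n: v(n, j) = 0 for all 0 ≤ j ≤ n−1. Moreover, if m − n − 1 ≥ 1, the translated restriction w(i,j) = v(n+1+i, j) (0 ≤ i ≤ m−n−2, 0 ≤ j ≤ n−1), extended by 0, is a harmonic function on the (m−n−1)×n rectangular grid. -/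
namespace Stmt18Aux

/-- Kronecker delta function at `l`. -/
def dlt (l : ℤ) : ℤ → ZMod 2 := fun x => if x = l then 1 else 0

/-- The path-graph adjacency operator, truncated to `[0, n-1]`. -/
def pathOp (n : ℤ) : (ℤ → ZMod 2) →ₗ[ZMod 2] (ℤ → ZMod 2) where
  toFun f := fun j => if 0 ≤ j ∧ j ≤ n - 1 then f (j - 1) + f (j + 1) else 0
  map_add' f g := by
    funext j; by_cases h : 0 ≤ j ∧ j ≤ n - 1 <;> simp only [h, and_self, if_true, if_false, Pi.add_apply, add_zero] <;> ring
  map_smul' c f := by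
    funext j; by_cases h : 0 ≤ j ∧ j ≤ n - 1 <;> simp only [h, and_self, if_true, if_false, Pi.smul_apply, smul_eq_mul, RingHom.id_apply, mul_zero] <;> ring

/-- Fibonacci-like polynomials in `pathOp n`. -/
def Mop (n : ℤ) : ℕ → Module.End (ZMod 2) (ℤ → ZMod 2)
  | 0 => 1
  | 1 => pathOp n
  | (k + 2) => pathOp n * Mop n (k + 1) + Mop n k

lemma add_self (f : ℤ → ZMod 2) : f + f = 0 := by
  funext x
  simp [Pi.add_apply, CharTwo.add_self_eq_zero]

lemma quad : ∀ a b c d : ZMod 2, a + b + c + d = 0 → b = a + c + d := by decide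

lemma pathOp_dlt (n l : ℤ) (h0 : 0 ≤ l) (h1 : l ≤ n - 1) :
    pathOp n (dlt l) =
      (if 1 ≤ l then dlt (l - 1) else 0) + (if l ≤ n - 2 then dlt (l + 1) else 0) := by
  funext x
  simp only [pathOp, dlt, LinearMap.coe_mk, AddHom.coe_mk, Pi.add_apply, Pi.zero_apply]
  by_cases hx : 0 ≤ x ∧ x ≤ n - 1
  · obtain ⟨hx0, hx1⟩ := hx
    rw [if_pos (⟨hx0, hx1⟩ : 0 ≤ x ∧ x ≤ n - 1)]
    split_ifs <;> simp only [dlt, Pi.zero_apply] <;>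
      first
        | rfl | decide | (exfalso; omega)
        | (split_ifs <;> first | rfl | decide | (exfalso; omega))
  · have hx' : x < 0 ∨ n - 1 < x := by omega
    rw [if_neg hx]
    rcases hx' with hx' | hx' <;>
      split_ifs <;> simp only [dlt, Pi.zero_apply] <;>
      first
        | rfl | decide | (exfalso; omega)
        | (split_ifs <;> first | rfl | decide | (exfalso; omega))

lemma commT (n : ℤ) : ∀ k, Commute (pathOp n) (Mop n k)
  | 0 => Commute.one_right _
  | 1 => Commute.refl _
  | (k + 2) => by
    have h1 := commT n (k + 1)
    have h2 := commT n k
    show Commute (pathOp n) (pathOp n * Mop n (k + 1) + Mop n k)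
    exact ((Commute.refl (pathOp n)).mul_right h1).add_right h2

lemma commMM (n : ℤ) (j : ℕ) : ∀ k, Commute (Mop n j) (Mop n k)
  | 0 => Commute.one_right _
  | 1 => (commT n j).symm
  | (k + 2) => by
    have h1 := commMM n j (k + 1)
    have h2 := commMM n j k
    show Commute (Mop n j) (pathOp n * Mop n (k + 1) + Mop n k)
    exact (((commT n j).symm).mul_right h1).add_right h2

lemma Mop_dlt (n : ℤ) (hn : 2 ≤ n) : ∀ k : ℕ, (k : ℤ) ≤ n - 1 → Mop n k (dlt 0) = dlt k
  | 0, _ => by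
    show (1 : Module.End (ZMod 2) (ℤ → ZMod 2)) (dlt 0) = dlt 0
    simp
  | 1, h => by
    show pathOp n (dlt 0) = dlt 1
    rw [pathOp_dlt n 0 le_rfl (by omega), if_neg (by omega), if_pos (by omega)]
    simp
  | (k + 2), h => by
    have hc : ((k : ℤ) + 2) ≤ n - 1 := by push_cast at h; omega
    have ih1 := Mop_dlt n hn (k + 1) (by push_cast; omega)
    have ih0 := Mop_dlt n hn k (by push_cast; omega)
    show (pathOp n * Mop n (k + 1) + Mop n k) (dlt 0) = dlt (k + 2)
    rw [LinearMap.add_apply, Module.End.mul_apply, ih1, ih0]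
    have hcast : ((k + 1 : ℕ) : ℤ) = (k : ℤ) + 1 := by push_cast; ring
    rw [hcast, pathOp_dlt n ((k : ℤ) + 1) (by omega) (by omega),
      if_pos (by omega), if_pos (by omega)]
    have e1 : (k : ℤ) + 1 - 1 = (k : ℤ) := by ring
    have e2 : (k : ℤ) + 1 + 1 = ((k + 2 : ℕ) : ℤ) := by push_cast; ring
    have e3 : dlt (((k + 2 : ℕ)) : ℤ) = dlt ((k : ℤ) + 2) := by norm_cast
    rw [e1, e2, e3, add_comm (dlt (k : ℤ)) (dlt ((k : ℤ) + 2)), add_assoc,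
      add_self, add_zero]

lemma Mop_dlt_top (n : ℤ) (hn : 2 ≤ n) : Mop n n.toNat (dlt 0) = 0 := by
  obtain ⟨k, hk⟩ : ∃ k : ℕ, n.toNat = k + 2 := ⟨n.toNat - 2, by omega⟩
  have hkn : ((k : ℤ) + 2) = n := by
    have : ((n.toNat : ℤ)) = n := Int.toNat_of_nonneg (by omega)
    rw [hk] at this; push_cast at this; omega
  have ih1 := Mop_dlt n hn (k + 1) (by push_cast; omega)
  have ih0 := Mop_dlt n hn k (by push_cast; omega)
  rw [hk]
  show (pathOp n * Mop n (k + 1) + Mop n k) (dlt 0) = 0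
  rw [LinearMap.add_apply, Module.End.mul_apply, ih1, ih0]
  have hcast : ((k + 1 : ℕ) : ℤ) = (k : ℤ) + 1 := by push_cast; ring
  rw [hcast, pathOp_dlt n ((k : ℤ) + 1) (by omega) (by omega),
    if_pos (by omega), if_neg (by omega), add_zero]
  have e1 : (k : ℤ) + 1 - 1 = (k : ℤ) := by ring
  rw [e1, add_self]

lemma Mop_kill (n : ℤ) (hn : 2 ≤ n) (l : ℕ) (hl : (l : ℤ) ≤ n - 1) :
    Mop n n.toNat (dlt l) = 0 := by
  rw [← Mop_dlt n hn l hl, ← Module.End.mul_apply, (commMM n n.toNat l).eq,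
    Module.End.mul_apply, Mop_dlt_top n hn]
  simp

lemma Mop_top_zero (n : ℤ) (hn : 2 ≤ n) (f : ℤ → ZMod 2)
    (hf : ∀ x : ℤ, ¬(0 ≤ x ∧ x ≤ n - 1) → f x = 0) :
    Mop n n.toNat f = 0 := by
  have hdecomp : f = ∑ l ∈ Finset.range n.toNat, f l • dlt (l : ℤ) := by
    funext x
    rw [Finset.sum_apply]
    by_cases hx : 0 ≤ x ∧ x ≤ n - 1
    · rw [Finset.sum_eq_single x.toNat]
      · simp only [Pi.smul_apply, dlt, smul_eq_mul]
        rw [if_pos (by omega), mul_one]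
        congr 1
        omega
      · intro b _ hb
        simp only [Pi.smul_apply, dlt, smul_eq_mul]
        rw [if_neg (by omega), mul_zero]
      · intro hmem
        exfalso
        apply hmem
        simp only [Finset.mem_range]
        omega
    · rw [hf x hx]
      symm
      apply Finset.sum_eq_zero
      intro l hl
      simp only [Finset.mem_range] at hl
      simp only [Pi.smul_apply, dlt, smul_eq_mul]
      rw [if_neg (by omega), mul_zero]
  rw [hdecomp, map_sum]
  apply Finset.sum_eq_zero
  intro l hl
  simp only [Finset.mem_range] at hl
  rw [map_smul, Mop_kill n hn l (by omega)]
  simp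

end Stmt18Aux

/-- for m > n, harmonic functions vanish on the column x = n, and
the translated restriction to the last m−n−1 columns is harmonic on the
(m−n−1)×n grid. -/
theorem zero_column_at_n (m n : ℤ) (hn : 2 ≤ n) (hmn : n < m)
    (v : ℤ → ℤ → ZMod 2) (hv : IsHarmonic m n v) :
    (∀ j : ℤ, 0 ≤ j → j ≤ n - 1 → v n j = 0) ∧
    (1 ≤ m - n - 1 →
      IsHarmonic (m - n - 1) n
        (fun i j => if InGrid (m - n - 1) n i j then v (n + 1 + i) j else 0)) := by
  open Stmt18Aux in
  obtain ⟨hv0, hv1⟩ := hv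
  -- column recurrence
  have key : ∀ k : ℕ, (k : ℤ) ≤ n → (fun x => v (k : ℤ) x) = Mop n k (fun x => v 0 x) := by
    intro k
    induction k using Nat.strong_induction_on with
    | _ k ih =>
      match k with
      | 0 =>
        intro _
        show _ = (1 : Module.End (ZMod 2) (ℤ → ZMod 2)) _
        simp
      | 1 =>
        intro _
        show _ = pathOp n (fun x => v 0 x)
        funext x
        simp only [pathOp, LinearMap.coe_mk, AddHom.coe_mk]
        by_cases hx : 0 ≤ x ∧ x ≤ n - 1
        · rw [if_pos hx]
          have h := hv1 0 x ⟨le_rfl, by omega, hx.1, hx.2⟩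
          have hz : v (0 - 1) x = 0 := hv0 _ _ (by unfold InGrid; omega)
          have h2 := quad _ _ _ _ h
          rw [hz] at h2
          show v ((1 : ℕ) : ℤ) x = v 0 (x - 1) + v 0 (x + 1)
          push_cast
          simpa using h2
        · rw [if_neg hx]
          exact hv0 _ _ (by unfold InGrid; omega)
      | (k + 2) =>
        intro hk
        have hk' : ((k : ℤ) + 2) ≤ n := by push_cast at hk; omega
        have ih1 := ih (k + 1) (by omega) (by push_cast; omega)
        have ih0 := ih k (by omega) (by push_cast; omega)
        show _ = (pathOp n * Mop n (k + 1) + Mop n k) (fun x => v 0 x)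
        rw [LinearMap.add_apply, Module.End.mul_apply, ← ih1, ← ih0]
        funext x
        simp only [pathOp, LinearMap.coe_mk, AddHom.coe_mk, Pi.add_apply]
        by_cases hx : 0 ≤ x ∧ x ≤ n - 1
        · rw [if_pos hx]
          have h := hv1 ((k : ℤ) + 1) x ⟨by omega, by omega, hx.1, hx.2⟩
          have h2 := quad _ _ _ _ h
          rw [show ((k : ℤ) + 1 - 1) = (k : ℤ) by ring,
            show ((k : ℤ) + 1 + 1) = (k : ℤ) + 2 by ring] at h2
          show v (((k + 2 : ℕ)) : ℤ) x
              = (v (((k + 1 : ℕ)) : ℤ) (x - 1) + v (((k + 1 : ℕ)) : ℤ) (x + 1))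
                + v ((k : ℕ) : ℤ) x
          push_cast
          linear_combination h2
        · rw [if_neg hx, zero_add]
          have h1 : v ((k + 2 : ℕ) : ℤ) x = 0 := hv0 _ _ (by unfold InGrid; omega)
          have h2 : v ((k : ℕ) : ℤ) x = 0 := hv0 _ _ (by unfold InGrid; omega)
          rw [h1, h2]
  -- the column at x = n vanishes (for every j, in fact)
  have col0 : ∀ j : ℤ, v n j = 0 := by
    intro j
    have hnn : ((n.toNat : ℤ)) = n := Int.toNat_of_nonneg (by omega)
    have h := key n.toNat (by omega)
    have hz := Mop_top_zero n hn (fun x => v 0 x)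
      (fun x hx => hv0 0 x (by unfold InGrid; omega))
    rw [hz] at h
    have := congrFun h j
    rw [hnn] at this
    simpa using this
  refine ⟨fun j _ _ => col0 j, fun hm => ⟨?_, ?_⟩⟩
  · intro i j h
    simp [h]
  · intro i j hij
    obtain ⟨hi0, hi1, hj0, hj1⟩ := hij
    simp only
    have e1 : (if InGrid (m - n - 1) n (i - 1) j then v (n + 1 + (i - 1)) j else 0)
        = v (n + i) j := by
      by_cases h : 1 ≤ i
      · rw [if_pos (by unfold InGrid; omega)]
        congr 1; ring
      · rw [if_neg (by unfold InGrid; omega)]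
        have hi : i = 0 := by omega
        rw [hi, add_zero, col0 j]
    have e2 : (if InGrid (m - n - 1) n (i + 1) j then v (n + 1 + (i + 1)) j else 0)
        = v (n + 2 + i) j := by
      by_cases h : i + 1 ≤ m - n - 2
      · rw [if_pos (by unfold InGrid; omega)]
        congr 1; ring
      · rw [if_neg (by unfold InGrid; omega)]
        have hi : i = m - n - 2 := by omega
        rw [hi]
        have : n + 2 + (m - n - 2) = m := by ring
        rw [this]
        exact (hv0 m j (by unfold InGrid; omega)).symm
    have e3 : (if InGrid (m - n - 1) n i (j - 1) then v (n + 1 + i) (j - 1) else 0)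
        = v (n + 1 + i) (j - 1) := by
      by_cases h : 1 ≤ j
      · rw [if_pos (by unfold InGrid; omega)]
      · rw [if_neg (by unfold InGrid; omega)]
        exact (hv0 _ _ (by unfold InGrid; omega)).symm
    have e4 : (if InGrid (m - n - 1) n i (j + 1) then v (n + 1 + i) (j + 1) else 0)
        = v (n + 1 + i) (j + 1) := by
      by_cases h : j ≤ n - 2
      · rw [if_pos (by unfold InGrid; omega)]
      · rw [if_neg (by unfold InGrid; omega)]
        exact (hv0 _ _ (by unfold InGrid; omega)).symm
    rw [e1, e2, e3, e4]
    have h := hv1 (n + 1 + i) j ⟨by omega, by omega, hj0, hj1⟩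
    rw [show (n + 1 + i - 1) = n + i by ring, show (n + 1 + i + 1) = n + 2 + i by ring] at h
    linear_combination h
end

section
/- (Triviality criterion.) Let m, n ≥ 2 be integers. The only harmonic function on the m×n rectangular grid is the zero function if and only if gcd(m+1, n+1) = 1. Equivalently, the adjacency matrix of the m×n rectangular grid graph is invertible over 𝔽₂ = ZMod 2 exactly when m+1 and n+1 are coprime. -/
private lemma gridZ2a : ∀ a b c d : ZMod 2, a + b + c + d = 0 → c + b = a + d := by decide
private lemma gridZ2b : ∀ a b c : ZMod 2, c = a + b → b = a + c := by decide
private lemma gridZ2c : ∀ a : ZMod 2, a + a + 0 + 0 = 0 := by decide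

private lemma gridEmodSucc (b i : ℤ) (hb : 0 < b) :
    ((i+1) % b = i % b + 1) ∨ (i % b = b - 1 ∧ (i+1) % b = 0) := by
  have h0 := Int.emod_nonneg i (by omega : b ≠ 0)
  have h1 := Int.emod_lt_of_pos i hb
  have key : (i + 1) % b = (i % b + 1) % b := by
    conv_lhs => rw [show i + 1 = (i % b + 1) + b * (i / b) by
      have := Int.emod_add_mul_ediv i b; linarith]
    rw [Int.add_mul_emod_self_left]
  rcases eq_or_lt_of_le (by omega : i % b + 1 ≤ b) with h | h
  · right
    refine ⟨by omega, ?_⟩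
    rw [key, h, Int.emod_self]
  · left
    rw [key, Int.emod_eq_of_lt (by omega) h]

private def gridFold (M i : ℤ) : ℤ :=
  if i % (2*M) ≤ M - 1 then i % (2*M) else 2*M - 2 - i % (2*M)

private lemma gridFold_range (M : ℤ) (hM : 2 ≤ M) (i : ℤ) :
    -1 ≤ gridFold M i ∧ gridFold M i ≤ M - 1 := by
  have h0 := Int.emod_nonneg i (by omega : 2*M ≠ 0)
  have h1 := Int.emod_lt_of_pos i (by omega : 0 < 2*M)
  unfold gridFold
  split <;> omega

private lemma gridFold_eq_self (M : ℤ) (hM : 2 ≤ M) (i : ℤ) (h1 : -1 ≤ i) (h2 : i ≤ M - 1) :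
    gridFold M i = i := by
  unfold gridFold
  rcases eq_or_lt_of_le h1 with h | h
  · have : i % (2*M) = 2*M - 1 := by
      rw [show i = (2*M - 1) + (2*M) * (-1) by omega, Int.add_mul_emod_self_left]
      exact Int.emod_eq_of_lt (by omega) (by omega)
    rw [this]
    split <;> omega
  · have : i % (2*M) = i := Int.emod_eq_of_lt (by omega) (by omega)
    rw [this]
    split <;> omega

private lemma gridFold_period (M : ℤ) (i : ℤ) : gridFold M (i + 2*M) = gridFold M i := by
  unfold gridFold
  rw [show i + 2*M = i + (2*M)*1 by ring, Int.add_mul_emod_self_left]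

private lemma gridFold_cases (M : ℤ) (hM : 2 ≤ M) (i : ℤ) :
    (gridFold M (i-1) = gridFold M i - 1 ∧ gridFold M (i+1) = gridFold M i + 1) ∨
    (gridFold M (i-1) = gridFold M i + 1 ∧ gridFold M (i+1) = gridFold M i - 1) ∨
    ((gridFold M i = -1 ∨ gridFold M i = M - 1) ∧ gridFold M (i-1) = gridFold M (i+1)) := by
  have h0 := Int.emod_nonneg i (by omega : 2*M ≠ 0)
  have h1 := Int.emod_lt_of_pos i (by omega : 0 < 2*M)
  have h0' := Int.emod_nonneg (i-1) (by omega : 2*M ≠ 0)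
  have h1' := Int.emod_lt_of_pos (i-1) (by omega : 0 < 2*M)
  have hs := gridEmodSucc (2*M) i (by omega)
  have hp := gridEmodSucc (2*M) (i-1) (by omega)
  rw [show i - 1 + 1 = i by ring] at hp
  unfold gridFold
  rcases hs with hs | ⟨hs1, hs2⟩ <;> rcases hp with hp | ⟨hp1, hp2⟩ <;>
    split_ifs <;> omega

private def gridW (m n : ℤ) (v : ℤ → ℤ → ZMod 2) (i j : ℤ) : ZMod 2 :=
  v (gridFold (m+1) i) (gridFold (n+1) j)

section A
variable {m n : ℤ} {v : ℤ → ℤ → ZMod 2}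

private lemma gridW_zeroL (hv : IsHarmonic m n v)
    (i j : ℤ) (h : gridFold (m+1) i = -1 ∨ gridFold (m+1) i = m) :
    gridW m n v i j = 0 := by
  apply hv.1
  intro hg
  have hg' : 0 ≤ gridFold (m+1) i ∧ gridFold (m+1) i ≤ m - 1 ∧ 0 ≤ gridFold (n+1) j ∧
      gridFold (n+1) j ≤ n - 1 := hg
  omega

private lemma gridW_zeroR (hv : IsHarmonic m n v)
    (i j : ℤ) (h : gridFold (n+1) j = -1 ∨ gridFold (n+1) j = n) :
    gridW m n v i j = 0 := by
  apply hv.1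
  intro hg
  have hg' : 0 ≤ gridFold (m+1) i ∧ gridFold (m+1) i ≤ m - 1 ∧ 0 ≤ gridFold (n+1) j ∧
      gridFold (n+1) j ≤ n - 1 := hg
  omega

private lemma gridW_periodL (i j : ℤ) : gridW m n v (i + 2*(m+1)) j = gridW m n v i j := by
  unfold gridW; rw [gridFold_period]

private lemma gridW_periodR (i j : ℤ) : gridW m n v i (j + 2*(n+1)) = gridW m n v i j := by
  unfold gridW; rw [gridFold_period]

private lemma gridW_harm (hm : 2 ≤ m) (hn : 2 ≤ n) (hv : IsHarmonic m n v) (i j : ℤ) :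
    gridW m n v (i-1) j + gridW m n v (i+1) j + gridW m n v i (j-1) + gridW m n v i (j+1) = 0 := by
  rcases gridFold_cases (m+1) (by omega) i with hi | hi | ⟨hi0, hi12⟩
  rotate_left 2
  · have e1 : gridW m n v (i-1) j = gridW m n v (i+1) j := by unfold gridW; rw [hi12]
    have e2 : gridW m n v i (j-1) = 0 := gridW_zeroL hv _ _ (by omega)
    have e3 : gridW m n v i (j+1) = 0 := gridW_zeroL hv _ _ (by omega)
    rw [e1, e2, e3]
    exact gridZ2c _
  all_goals (
    rcases gridFold_cases (n+1) (by omega) j with hj | hj | ⟨hj0, hj12⟩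
    rotate_left 2
    · have e1 : gridW m n v i (j-1) = gridW m n v i (j+1) := by unfold gridW; rw [hj12]
      have e2 : gridW m n v (i-1) j = 0 := gridW_zeroR hv _ _ (by omega)
      have e3 : gridW m n v (i+1) j = 0 := gridW_zeroR hv _ _ (by omega)
      rw [e2, e3, e1]
      have : ∀ a : ZMod 2, 0 + 0 + a + a = 0 := by decide
      exact this _
    all_goals (
      have ri0 := gridFold_range (m+1) (by omega) i
      have ri1 := gridFold_range (m+1) (by omega) (i-1)
      have ri2 := gridFold_range (m+1) (by omega) (i+1)
      have rj0 := gridFold_range (n+1) (by omega) j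
      have rj1 := gridFold_range (n+1) (by omega) (j-1)
      have rj2 := gridFold_range (n+1) (by omega) (j+1)
      have hgrid : InGrid m n (gridFold (m+1) i) (gridFold (n+1) j) := by
        refine ⟨?_, ?_, ?_, ?_⟩ <;> omega
      have hh := hv.2 _ _ hgrid
      unfold gridW
      rw [hi.1, hi.2, hj.1, hj.2]
      linear_combination hh))

private def gridD1 (m n : ℤ) (v : ℤ → ℤ → ZMod 2) (i j : ℤ) : ZMod 2 :=
  gridW m n v i j + gridW m n v (i+1) (j+1)

private def gridChi (m n : ℤ) (v : ℤ → ℤ → ZMod 2) (s : ℤ) : ZMod 2 :=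
  gridD1 m n v s 0

private lemma gridD1_step (hm : 2 ≤ m) (hn : 2 ≤ n) (hv : IsHarmonic m n v) (i j : ℤ) :
    gridD1 m n v (i+1) (j-1) = gridD1 m n v i j := by
  have hh := gridW_harm hm hn hv (i+1) j
  rw [show i+1-1 = i by ring, show i+1+1 = i+2 by ring] at hh
  unfold gridD1
  rw [show i+1+1 = i+2 by ring, show j-1+1 = j by ring]
  exact gridZ2a _ _ _ _ hh

private lemma gridD1_shift (hm : 2 ≤ m) (hn : 2 ≤ n) (hv : IsHarmonic m n v) (i j : ℤ) :
    ∀ k : ℤ, gridD1 m n v (i+k) (j-k) = gridD1 m n v i j := by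
  intro k
  induction k using Int.induction_on with
  | zero => rw [add_zero, sub_zero]
  | succ k ih =>
    have := gridD1_step hm hn hv (i+k) (j-k)
    rw [show i+(k:ℤ)+1 = i+((k:ℤ)+1) by ring, show j-(k:ℤ)-1 = j-((k:ℤ)+1) by ring] at this
    rw [this, ih]
  | pred k ih =>
    have := gridD1_step hm hn hv (i+(-(k:ℤ)-1)) (j-(-(k:ℤ)-1))
    rw [show i+(-(k:ℤ)-1)+1 = i+(-(k:ℤ)) by ring,
        show j-(-(k:ℤ)-1)-1 = j-(-(k:ℤ)) by ring] at this
    rw [← this, ih]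

private lemma gridD1_diag (hm : 2 ≤ m) (hn : 2 ≤ n) (hv : IsHarmonic m n v) (i j : ℤ) :
    gridD1 m n v i j = gridChi m n v (i+j) := by
  have := gridD1_shift hm hn hv i j j
  rw [sub_self] at this
  rw [← this]; rfl

private lemma gridChi_perM (hm : 2 ≤ m) (hn : 2 ≤ n) (hv : IsHarmonic m n v) (s : ℤ) :
    gridChi m n v (s + 2*(m+1)) = gridChi m n v s := by
  unfold gridChi gridD1
  rw [gridW_periodL, show s + 2*(m+1)+1 = (s+1) + 2*(m+1) by ring, gridW_periodL]

private lemma gridChi_perN (hm : 2 ≤ m) (hn : 2 ≤ n) (hv : IsHarmonic m n v) (s : ℤ) :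
    gridChi m n v (s + 2*(n+1)) = gridChi m n v s := by
  have h1 : gridChi m n v (s + 2*(n+1)) = gridD1 m n v s (2*(n+1)) := by
    have := gridD1_shift hm hn hv s (2*(n+1)) (2*(n+1))
    rw [sub_self] at this
    exact this
  rw [h1]
  unfold gridChi gridD1
  rw [show (2*(n+1) : ℤ) = 0 + 2*(n+1) by ring, gridW_periodR,
      show (0:ℤ) + 2*(n+1) + 1 = 1 + 2*(n+1) by ring, gridW_periodR]
  norm_num

private lemma gridChi_mulM (hm : 2 ≤ m) (hn : 2 ≤ n) (hv : IsHarmonic m n v) (s : ℤ) :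
    ∀ k : ℤ, gridChi m n v (s + 2*(m+1)*k) = gridChi m n v s := by
  intro k
  induction k using Int.induction_on with
  | zero => rw [mul_zero, add_zero]
  | succ k ih =>
    rw [show s + 2*(m+1)*((k:ℤ)+1) = (s + 2*(m+1)*(k:ℤ)) + 2*(m+1) by ring,
        gridChi_perM hm hn hv, ih]
  | pred k ih =>
    have := gridChi_perM hm hn hv (s + 2*(m+1)*(-(k:ℤ)-1))
    rw [show s + 2*(m+1)*(-(k:ℤ)-1) + 2*(m+1) = s + 2*(m+1)*(-(k:ℤ)) by ring] at this
    rw [← ih, ← this]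

private lemma gridChi_mulN (hm : 2 ≤ m) (hn : 2 ≤ n) (hv : IsHarmonic m n v) (s : ℤ) :
    ∀ k : ℤ, gridChi m n v (s + 2*(n+1)*k) = gridChi m n v s := by
  intro k
  induction k using Int.induction_on with
  | zero => rw [mul_zero, add_zero]
  | succ k ih =>
    rw [show s + 2*(n+1)*((k:ℤ)+1) = (s + 2*(n+1)*(k:ℤ)) + 2*(n+1) by ring,
        gridChi_perN hm hn hv, ih]
  | pred k ih =>
    have := gridChi_perN hm hn hv (s + 2*(n+1)*(-(k:ℤ)-1))
    rw [show s + 2*(n+1)*(-(k:ℤ)-1) + 2*(n+1) = s + 2*(n+1)*(-(k:ℤ)) by ring] at this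
    rw [← ih, ← this]

private lemma gridChi_two (hm : 2 ≤ m) (hn : 2 ≤ n) (hv : IsHarmonic m n v)
    (hg : Int.gcd (m+1) (n+1) = 1) (s : ℤ) :
    gridChi m n v (s + 2) = gridChi m n v s := by
  obtain ⟨x, y, hxy⟩ := Int.isCoprime_iff_gcd_eq_one.mpr hg
  have e : s + 2 = (s + 2*(n+1)*y) + 2*(m+1)*x := by linear_combination (-2)*hxy
  rw [e, gridChi_mulM hm hn hv, gridChi_mulN hm hn hv]

private lemma gridChi_even (hm : 2 ≤ m) (hn : 2 ≤ n) (hv : IsHarmonic m n v)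
    (hg : Int.gcd (m+1) (n+1) = 1) (s : ℤ) :
    ∀ t : ℤ, gridChi m n v (s + 2*t) = gridChi m n v s := by
  intro t
  induction t using Int.induction_on with
  | zero => rw [mul_zero, add_zero]
  | succ k ih =>
    rw [show s + 2*((k:ℤ)+1) = (s + 2*(k:ℤ)) + 2 by ring, gridChi_two hm hn hv hg, ih]
  | pred k ih =>
    have := gridChi_two hm hn hv hg (s + 2*(-(k:ℤ)-1))
    rw [show s + 2*(-(k:ℤ)-1) + 2 = s + 2*(-(k:ℤ)) by ring] at this
    rw [← ih, ← this]


private lemma gridW_diag (hm : 2 ≤ m) (hn : 2 ≤ n) (hv : IsHarmonic m n v)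
    (hg : Int.gcd (m+1) (n+1) = 1) :
    ∀ (k : ℕ) (a b : ℤ),
      gridW m n v (a+k) (b+k) = gridW m n v a b + (k : ZMod 2) * gridChi m n v (a+b) := by
  intro k
  induction k with
  | zero => intro a b; push_cast; rw [add_zero, add_zero, zero_mul, add_zero]
  | succ k ih =>
    intro a b
    have h1 : gridW m n v (a+(k:ℤ)+1) (b+(k:ℤ)+1)
        = gridW m n v (a+(k:ℤ)) (b+(k:ℤ)) + gridD1 m n v (a+(k:ℤ)) (b+(k:ℤ)) :=
      gridZ2b _ _ _ rfl
    have h2 : gridD1 m n v (a+(k:ℤ)) (b+(k:ℤ)) = gridChi m n v (a+b) := by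
      rw [gridD1_diag hm hn hv, show a+(k:ℤ)+(b+(k:ℤ)) = (a+b) + 2*(k:ℤ) by ring,
          gridChi_even hm hn hv hg]
    push_cast
    rw [show a+((k:ℤ)+1) = a+(k:ℤ)+1 by ring, show b+((k:ℤ)+1) = b+(k:ℤ)+1 by ring,
        h1, h2, ih]
    ring

private lemma gridW_e1 (hm : 2 ≤ m) (hn : 2 ≤ n) (hv : IsHarmonic m n v)
    (hg : Int.gcd (m+1) (n+1) = 1) (i j : ℤ) (hi : -1 ≤ i) :
    gridW m n v i j = ((i+1 : ℤ) : ZMod 2) * gridChi m n v (i+j) := by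
  set k : ℕ := (i+1).toNat with hk
  have hkz : (k : ℤ) = i + 1 := Int.toNat_of_nonneg (by omega)
  have h0 : gridW m n v (-1) (j-i-1) = 0 := by
    apply gridW_zeroL hv
    left
    exact gridFold_eq_self (m+1) (by omega) (-1) (by omega) (by omega)
  have := gridW_diag hm hn hv hg k (-1) (j-i-1)
  rw [h0, zero_add, hkz] at this
  rw [show (-1:ℤ) + (i+1) = i by ring, show j-i-1+(i+1) = j by ring,
      show (-1:ℤ) + (j-i-1) = (i+j) + 2*(-i-1) by ring, gridChi_even hm hn hv hg] at this
  rw [this]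
  have hc : ((k:ℕ) : ZMod 2) = ((i+1 : ℤ) : ZMod 2) := by
    rw [← hkz]
    push_cast
    ring
  rw [hc]

private def gridD2 (m n : ℤ) (v : ℤ → ℤ → ZMod 2) (i j : ℤ) : ZMod 2 :=
  gridW m n v i j + gridW m n v (i+1) (j-1)

private lemma gridD2_step (hm : 2 ≤ m) (hn : 2 ≤ n) (hv : IsHarmonic m n v) (x y : ℤ) :
    gridD2 m n v (x+1) (y+1) = gridD2 m n v x y := by
  have hh := gridW_harm hm hn hv (x+1) y
  rw [show x+1-1 = x by ring, show x+1+1 = x+2 by ring] at hh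
  unfold gridD2
  rw [show x+1+1 = x+2 by ring, show y+1-1 = y by ring]
  have : ∀ a b c d : ZMod 2, a + b + c + d = 0 → d + b = a + c := by decide
  exact this _ _ _ _ hh

private lemma gridChi_one (hm : 2 ≤ m) (hn : 2 ≤ n) (hv : IsHarmonic m n v)
    (hg : Int.gcd (m+1) (n+1) = 1) :
    gridChi m n v 1 = 0 := by
  have hfm : gridFold (m+1) (-1) = -1 := gridFold_eq_self (m+1) (by omega) _ (by omega) (by omega)
  have hfn : gridFold (n+1) (-1) = -1 := gridFold_eq_self (n+1) (by omega) _ (by omega) (by omega)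
  have hd : gridD2 m n v 0 1 = 0 := by
    have := gridD2_step hm hn hv (-1) 0
    rw [show (-1:ℤ)+1 = 0 by ring, show (0:ℤ)+1 = 1 by ring] at this
    rw [this]
    unfold gridD2
    rw [gridW_zeroL hv _ _ (Or.inl hfm), gridW_zeroR hv _ _ (by rw [show (0:ℤ)-1 = -1 by ring]; exact Or.inl hfn), add_zero]
  have h10 : gridW m n v 1 0 = 0 := by
    rw [gridW_e1 hm hn hv hg 1 0 (by omega)]
    have : ((1+1 : ℤ) : ZMod 2) = 0 := by decide
    rw [this, zero_mul]
  have h01 : gridW m n v 0 1 = 0 := by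
    have : gridD2 m n v 0 1 = gridW m n v 0 1 + gridW m n v 1 0 := by
      unfold gridD2
      norm_num
    rw [this, h10, add_zero] at hd
    exact hd
  have := gridW_e1 hm hn hv hg 0 1 (by omega)
  rw [h01] at this
  have h1 : ((0+1 : ℤ) : ZMod 2) = 1 := by decide
  rw [h1, one_mul] at this
  rw [show (1:ℤ) = 0 + 1 by ring, ← this]

private lemma gridChi_zero (hm : 2 ≤ m) (hn : 2 ≤ n) (hv : IsHarmonic m n v)
    (hg : Int.gcd (m+1) (n+1) = 1) :
    gridChi m n v 0 = 0 := by
  have hpar : ¬((2:ℤ) ∣ (m+1)) ∨ ¬((2:ℤ) ∣ (n+1)) := by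
    by_contra h
    push_neg at h
    have : (2:ℤ) ∣ (Int.gcd (m+1) (n+1) : ℤ) := Int.dvd_coe_gcd h.1 h.2
    rw [hg] at this
    norm_num at this
  have hcast : ∀ a : ℤ, a % 2 = 1 → ((a : ZMod 2)) = 1 := by
    intro a ha
    have : a = 2*(a/2) + 1 := by omega
    rw [this]
    push_cast
    have h2 : (2 : ZMod 2) = 0 := rfl
    rw [h2, zero_mul, zero_add]
  rcases hpar with h | h
  · -- m even
    have hme : m % 2 = 0 := by omega
    have hw : gridW m n v m 0 = 0 := by
      unfold gridW
      rw [gridFold_eq_self (m+1) (by omega) m (by omega) (by omega)]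
      apply hv.1
      intro hgr
      have : 0 ≤ m ∧ m ≤ m - 1 ∧ (0:ℤ) ≤ gridFold (n+1) 0 ∧ gridFold (n+1) 0 ≤ n-1 := hgr
      omega
    have := gridW_e1 hm hn hv hg m 0 (by omega)
    rw [hw, hcast (m+1) (by omega)] at this
    rw [one_mul, add_zero] at this
    rw [show (0:ℤ) = m + 2*(-(m/2)) by omega, gridChi_even hm hn hv hg]
    exact this.symm
  · -- n even
    have hne : n % 2 = 0 := by omega
    have hw : gridW m n v 0 n = 0 := by
      unfold gridW
      rw [gridFold_eq_self (n+1) (by omega) n (by omega) (by omega)]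
      apply hv.1
      intro hgr
      have : (0:ℤ) ≤ gridFold (m+1) 0 ∧ gridFold (m+1) 0 ≤ m - 1 ∧ 0 ≤ n ∧ n ≤ n-1 := hgr
      omega
    have := gridW_e1 hm hn hv hg 0 n (by omega)
    rw [hw] at this
    have h1 : ((0+1 : ℤ) : ZMod 2) = 1 := by decide
    rw [h1, one_mul, zero_add] at this
    rw [show (0:ℤ) = n + 2*(-(n/2)) by omega, gridChi_even hm hn hv hg]
    exact this.symm

private lemma gridDirA (hm : 2 ≤ m) (hn : 2 ≤ n) (hv : IsHarmonic m n v)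
    (hg : Int.gcd (m+1) (n+1) = 1) : v = 0 := by
  funext i j
  show v i j = 0
  by_cases hgr : InGrid m n i j
  · have hb : 0 ≤ i ∧ i ≤ m - 1 ∧ 0 ≤ j ∧ j ≤ n - 1 := hgr
    have hw : gridW m n v i j = v i j := by
      unfold gridW
      rw [gridFold_eq_self (m+1) (by omega) i (by omega) (by omega),
          gridFold_eq_self (n+1) (by omega) j (by omega) (by omega)]
    have he := gridW_e1 hm hn hv hg i j (by omega)
    have hchi : gridChi m n v (i+j) = 0 := by
      rcases Int.even_or_odd (i+j) with ⟨t, ht⟩ | ⟨t, ht⟩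
      · rw [show i+j = 0 + 2*t by omega, gridChi_even hm hn hv hg]
        exact gridChi_zero hm hn hv hg
      · rw [show i+j = 1 + 2*t by omega, gridChi_even hm hn hv hg]
        exact gridChi_one hm hn hv hg
    rw [← hw, he, hchi, mul_zero]
  · exact hv.1 i j hgr

end A

section B
variable {m n : ℤ}

private def gridPhi (d s : ℤ) : ZMod 2 := if (2*d) ∣ (s + 2) then 1 else 0

private def gridWB (d i j : ℤ) : ZMod 2 := gridPhi d (i+j) + gridPhi d (j-i-2)

private lemma gridPhi_eq (d a b : ℤ) (h : (2*d) ∣ (a - b)) : gridPhi d a = gridPhi d b := by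
  unfold gridPhi
  have : (2*d) ∣ (a+2) ↔ (2*d) ∣ (b+2) := by
    constructor <;> intro hd
    · have := dvd_sub hd h
      rw [show a + 2 - (a - b) = b + 2 by ring] at this
      exact this
    · have := dvd_add hd h
      rw [show b + 2 + (a - b) = a + 2 by ring] at this
      exact this
  rw [if_congr this rfl rfl]

private lemma gridPhi_refl (d a : ℤ) : gridPhi d a = gridPhi d (-4 - a) := by
  unfold gridPhi
  have : (2*d) ∣ (a+2) ↔ (2*d) ∣ (-4 - a + 2) := by
    rw [show -4 - a + 2 = -(a + 2) by ring, dvd_neg]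
  rw [if_congr this rfl rfl]

private lemma gridWB_sum (d i j : ℤ) :
    gridWB d (i-1) j + gridWB d (i+1) j + gridWB d i (j-1) + gridWB d i (j+1) = 0 := by
  unfold gridWB
  rw [show i-1+j = i+j-1 by ring, show j-(i-1)-2 = j-i-1 by ring,
      show i+1+j = i+j+1 by ring, show j-(i+1)-2 = j-i-3 by ring,
      show i+(j-1) = i+j-1 by ring, show j-1-i-2 = j-i-3 by ring,
      show i+(j+1) = i+j+1 by ring, show j+1-i-2 = j-i-1 by ring]
  have : ∀ a b c d : ZMod 2, (a+b) + (c+d) + (a+d) + (c+b) = 0 := by decide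
  exact this _ _ _ _

private lemma gridWB_left (d j : ℤ) : gridWB d (-1) j = 0 := by
  unfold gridWB
  rw [show (-1:ℤ)+j = j-1 by ring, show j-(-1:ℤ)-2 = j-1 by ring]
  exact CharTwo.add_self_eq_zero _

private lemma gridWB_bottom (d i : ℤ) : gridWB d i (-1) = 0 := by
  unfold gridWB
  rw [show i+(-1:ℤ) = i-1 by ring, show (-1:ℤ)-i-2 = -4-(i-1) by ring, ← gridPhi_refl]
  exact CharTwo.add_self_eq_zero _

private lemma gridWB_right (d i : ℤ) (hd : d ∣ (m+1)) : gridWB d m i = 0 := by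
  unfold gridWB
  obtain ⟨c, hc⟩ := hd
  rw [gridPhi_eq d (m+i) (i-m-2) ⟨c, by linarith⟩]
  exact CharTwo.add_self_eq_zero _

private lemma gridWB_top (d i : ℤ) (hd : d ∣ (n+1)) : gridWB d i n = 0 := by
  unfold gridWB
  obtain ⟨c, hc⟩ := hd
  rw [gridPhi_refl d (n-i-2), show -4-(n-i-2) = i-n-2 by ring,
      gridPhi_eq d (i+n) (i-n-2) ⟨c, by linarith⟩]
  exact CharTwo.add_self_eq_zero _

private lemma gridDirB (hm : 2 ≤ m) (hn : 2 ≤ n)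
    (hg : Int.gcd (m+1) (n+1) ≠ 1) :
    ∃ v : ℤ → ℤ → ZMod 2, IsHarmonic m n v ∧ v ≠ 0 := by
  set d : ℤ := ((Int.gcd (m+1) (n+1) : ℕ) : ℤ) with hdd
  have hdm : d ∣ (m+1) := Int.gcd_dvd_left _ _
  have hdn : d ∣ (n+1) := Int.gcd_dvd_right _ _
  have hd0 : d ≠ 0 := by
    intro h
    rw [hdd] at h
    have := Int.gcd_eq_zero_iff.mp (by exact_mod_cast h)
    omega
  have hd2 : 2 ≤ d := by
    have : 0 ≤ d := by positivity
    rcases (by omega : d = 1 ∨ 2 ≤ d) with h | h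
    · exfalso
      apply hg
      have : ((Int.gcd (m+1) (n+1) : ℕ) : ℤ) = 1 := h
      exact_mod_cast this
    · exact h
  refine ⟨fun i j => if InGrid m n i j then gridWB d i j else 0, ⟨fun i j h => by simp [h], ?_⟩, ?_⟩
  · intro i j hgr
    have hb : 0 ≤ i ∧ i ≤ m - 1 ∧ 0 ≤ j ∧ j ≤ n - 1 := hgr
    have e1 : (if InGrid m n (i-1) j then gridWB d (i-1) j else 0) = gridWB d (i-1) j := by
      split
      · rfl
      · next h =>
        have : ¬(0 ≤ i-1 ∧ i-1 ≤ m-1 ∧ 0 ≤ j ∧ j ≤ n-1) := h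
        rw [show i-1 = -1 by omega, gridWB_left]
    have e2 : (if InGrid m n (i+1) j then gridWB d (i+1) j else 0) = gridWB d (i+1) j := by
      split
      · rfl
      · next h =>
        have : ¬(0 ≤ i+1 ∧ i+1 ≤ m-1 ∧ 0 ≤ j ∧ j ≤ n-1) := h
        rw [show i+1 = m by omega, gridWB_right d j hdm]
    have e3 : (if InGrid m n i (j-1) then gridWB d i (j-1) else 0) = gridWB d i (j-1) := by
      split
      · rfl
      · next h =>
        have : ¬(0 ≤ i ∧ i ≤ m-1 ∧ 0 ≤ j-1 ∧ j-1 ≤ n-1) := h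
        rw [show j-1 = -1 by omega, gridWB_bottom]
    have e4 : (if InGrid m n i (j+1) then gridWB d i (j+1) else 0) = gridWB d i (j+1) := by
      split
      · rfl
      · next h =>
        have : ¬(0 ≤ i ∧ i ≤ m-1 ∧ 0 ≤ j+1 ∧ j+1 ≤ n-1) := h
        rw [show j+1 = n by omega, gridWB_top d i hdn]
    show (if InGrid m n (i-1) j then gridWB d (i-1) j else 0)
        + (if InGrid m n (i+1) j then gridWB d (i+1) j else 0)
        + (if InGrid m n i (j-1) then gridWB d i (j-1) else 0)
        + (if InGrid m n i (j+1) then gridWB d i (j+1) else 0) = 0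
    rw [e1, e2, e3, e4]
    exact gridWB_sum d i j
  · intro h
    have h00 : (if InGrid m n 0 0 then gridWB d 0 0 else 0) = 0 := congrFun (congrFun h 0) 0
    have hin : InGrid m n 0 0 := ⟨le_refl 0, by omega, le_refl 0, by omega⟩
    rw [if_pos hin] at h00
    unfold gridWB gridPhi at h00
    rw [show (0:ℤ)+0 = 0 by ring, show (0:ℤ)-0-2 = -2 by ring] at h00
    rw [if_neg (by intro hdvd; have := Int.le_of_dvd (by norm_num) hdvd; omega),
        if_pos (by rw [show (-2:ℤ)+2 = 0 by ring]; exact dvd_zero _)] at h00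
    norm_num at h00

end B

/-- the only harmonic function on the m×n grid is zero if and
only if gcd(m+1, n+1) = 1. -/
theorem triviality_criterion (m n : ℤ) (hm : 2 ≤ m) (hn : 2 ≤ n) :
    (∀ v : ℤ → ℤ → ZMod 2, IsHarmonic m n v → v = 0) ↔
      Int.gcd (m + 1) (n + 1) = 1 := by
  constructor
  · intro h
    by_contra hg
    obtain ⟨v, hv, hne⟩ := gridDirB hm hn hg
    exact hne (h v hv)
  · intro hg v hv
    exact gridDirA hm hn hv hg
end
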